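/- arXiv:1311.6043 — 2 statements merged into one kernel-verified Lean document; each statement's English description precedes it below -/
import Mathlib

section
/- Let τ be an exponentially distributed random variable with rate u > 0, independent of the subordinator T, and let ξ < f(u). Then E[ exp( ξ · S(τ) ) ] = f(u) / ( f(u) − ξ ). In particular, for every t > 0 and every ξ > 0, E[ exp( ξ · S(t) ) ] < ∞, i.e., S(t) has finite exponential moments of all orders. -/
open MeasureTheory ProbabilityTheory Filter Set
open scoped ENNReal NNReal

noncomputable section

/-- The (generalized, right-continuous) inverse of an increasing process `T`:
`S(t) = inf {τ > 0 : T(τ) > t}` (the inverse subordinator / first-passage time process). -/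
def invSub {Ω : Type*} (T : ℝ → Ω → ℝ) (t : ℝ) (ω : Ω) : ℝ :=
  sInf {τ : ℝ | 0 < τ ∧ t < T τ ω}

/-- The Bernstein function (Laplace exponent) associated with the Lévy measure `ν`
(zero drift): `f(u) = ∫_(0,∞) (1 - e^{-u x}) ν(dx)`. -/
def levyExponent (ν : Measure ℝ) (u : ℝ) : ℝ :=
  ∫ x in Set.Ioi (0 : ℝ), (1 - Real.exp (-u * x)) ∂ν

/-- `ν` is a Lévy measure of a subordinator, supported in `(0,∞)` with
`∫ min(1,x) ν(dx) < ∞`, and with infinite total mass `ν(0,∞) = ∞`. -/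
def IsLevyMeasure (ν : Measure ℝ) : Prop :=
  ν (Set.Iic 0) = 0 ∧ ν (Set.Ioi 0) = ⊤ ∧
    ∫⁻ x in Set.Ioi (0 : ℝ), ENNReal.ofReal (min 1 x) ∂ν ≠ ⊤

/-- An increasing Lévy process (subordinator): `T(0) = 0`, a.s. increasing càdlàg paths,
stationary and independent increments. -/
structure IsSubordinatorProc {Ω : Type*} [MeasurableSpace Ω] (P : Measure Ω)
    (T : ℝ → Ω → ℝ) : Prop where
  meas : ∀ t, Measurable (T t)
  start : ∀ᵐ ω ∂P, T 0 ω = 0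
  mono : ∀ᵐ ω ∂P, MonotoneOn (fun t => T t ω) (Set.Ici 0)
  rightCont : ∀ᵐ ω ∂P, ∀ t ∈ Set.Ici (0 : ℝ),
    ContinuousWithinAt (fun s => T s ω) (Set.Ici t) t
  leftLim : ∀ᵐ ω ∂P, ∀ t ∈ Set.Ioi (0 : ℝ), ∃ l : ℝ,
    Filter.Tendsto (fun s => T s ω) (nhdsWithin t (Set.Iio t)) (nhds l)
  statInc : ∀ s t : ℝ, 0 ≤ s → 0 ≤ t →
    P.map (fun ω => T (s + t) ω - T s ω) = P.map (T t)
  indepInc : ∀ n : ℕ, ∀ t : ℕ → ℝ, Monotone t → (∀ i, 0 ≤ t i) →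
    iIndepFun
      (fun (i : Fin n) ω => T (t (i + 1)) ω - T (t i) ω) P

/-- `T` has Laplace transform `E[exp(-u T(t))] = exp(-t f(u))`. -/
def HasLaplaceExponent {Ω : Type*} [MeasurableSpace Ω] (P : Measure Ω)
    (T : ℝ → Ω → ℝ) (f : ℝ → ℝ) : Prop :=
  ∀ t : ℝ, 0 ≤ t → ∀ u : ℝ, 0 < u →
    ∫ ω, Real.exp (-u * T t ω) ∂P = Real.exp (-t * f u)

/-- A standard one-dimensional Brownian motion: `B(0) = 0`, a.s. continuous paths,
independent increments, `B(t) - B(s) ~ N(0, t-s)`. -/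
structure IsBrownianMotion {Ω : Type*} [MeasurableSpace Ω] (P : Measure Ω)
    (B : ℝ → Ω → ℝ) : Prop where
  meas : ∀ t, Measurable (B t)
  start : ∀ᵐ ω ∂P, B 0 ω = 0
  cont : ∀ᵐ ω ∂P, Continuous fun t => B t ω
  gaussInc : ∀ s t : ℝ, 0 ≤ s → s ≤ t →
    P.map (fun ω => B t ω - B s ω) = gaussianReal 0 (Real.toNNReal (t - s))
  indepInc : ∀ n : ℕ, ∀ t : ℕ → ℝ, Monotone t → (∀ i, 0 ≤ t i) →
    iIndepFun
      (fun (i : Fin n) ω => B (t (i + 1)) ω - B (t i) ω) P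

namespace InvSubAux

lemma integrand_nonneg {u x : ℝ} (hu : 0 ≤ u) (hx : 0 ≤ x) :
    0 ≤ 1 - Real.exp (-u * x) := by
  have : Real.exp (-u * x) ≤ 1 := by
    rw [← Real.exp_zero]
    exact Real.exp_le_exp.2 (by nlinarith)
  linarith

lemma integrand_le {u x : ℝ} (hu : 0 < u) (hx : 0 < x) :
    1 - Real.exp (-u * x) ≤ max 1 u * min 1 x := by
  have h1 : Real.exp (-u * x) ≤ 1 := by
    rw [← Real.exp_zero]; exact Real.exp_le_exp.2 (by nlinarith)
  have h2 : 1 - u * x ≤ Real.exp (-u * x) := by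
    have := Real.add_one_le_exp (-u * x); linarith
  have h0 : 0 ≤ Real.exp (-u * x) := (Real.exp_pos _).le
  rcases le_total 1 x with h | h
  · have : min 1 x = 1 := min_eq_left h
    rw [this]
    have : (1:ℝ) ≤ max 1 u := le_max_left _ _
    nlinarith
  · have : min 1 x = x := min_eq_right h
    rw [this]
    have hum : u ≤ max 1 u := le_max_right _ _
    nlinarith

lemma levy_integrable {ν : Measure ℝ} (hν : IsLevyMeasure ν) {u : ℝ} (hu : 0 < u) :
    IntegrableOn (fun x => 1 - Real.exp (-u * x)) (Set.Ioi 0) ν := by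
  constructor
  · exact (Continuous.aestronglyMeasurable (by continuity))
  · rw [hasFiniteIntegral_iff_norm]
    calc ∫⁻ x, ENNReal.ofReal ‖1 - Real.exp (-u * x)‖ ∂(ν.restrict (Set.Ioi 0))
        ≤ ∫⁻ x, ENNReal.ofReal (max 1 u) * ENNReal.ofReal (min 1 x)
            ∂(ν.restrict (Set.Ioi 0)) := by
          apply lintegral_mono_ae
          filter_upwards [ae_restrict_mem measurableSet_Ioi] with x hx
          rw [← ENNReal.ofReal_mul (by positivity)]
          apply ENNReal.ofReal_le_ofReal
          rw [Real.norm_eq_abs, abs_of_nonneg (integrand_nonneg hu.le (le_of_lt hx))]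
          exact integrand_le hu hx
      _ = ENNReal.ofReal (max 1 u) *
            ∫⁻ x in Set.Ioi 0, ENNReal.ofReal (min 1 x) ∂ν := by
          rw [lintegral_const_mul]
          exact ENNReal.measurable_ofReal.comp (measurable_const.min measurable_id)
      _ < ⊤ := ENNReal.mul_lt_top ENNReal.ofReal_lt_top (lt_top_iff_ne_top.2 hν.2.2)

lemma levyExponent_pos {ν : Measure ℝ} (hν : IsLevyMeasure ν) {u : ℝ} (hu : 0 < u) :
    0 < levyExponent ν u := by
  have hnn : 0 ≤ᵐ[ν.restrict (Set.Ioi 0)] fun x => 1 - Real.exp (-u * x) := by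
    filter_upwards [ae_restrict_mem measurableSet_Ioi] with x hx
    exact integrand_nonneg hu.le (le_of_lt hx)
  rw [levyExponent, setIntegral_pos_iff_support_of_nonneg_ae hnn (levy_integrable hν hu)]
  have hsub : Set.Ioi (0:ℝ) ⊆ Function.support (fun x => 1 - Real.exp (-u * x)) ∩ Set.Ioi 0 := by
      intro x hx
      refine ⟨?_, hx⟩
      have h1 : Real.exp (-u * x) < 1 := by
        rw [← Real.exp_zero]
        exact Real.exp_lt_exp.2 (by nlinarith [mem_Ioi.1 hx])
      simp only [Function.mem_support]
      intro h; linarith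
  calc (0:ℝ≥0∞) < ⊤ := by simp
    _ = ν (Set.Ioi 0) := hν.2.1.symm
    _ ≤ ν _ := measure_mono hsub

lemma measure_Ioi_lt_top {ν : Measure ℝ} (hν : IsLevyMeasure ν) {ε : ℝ} (hε : 0 < ε) :
    ν (Set.Ioi ε) < ⊤ := by
  by_contra h
  push_neg at h
  replace h : ν (Set.Ioi ε) = ⊤ := top_le_iff.1 h
  apply hν.2.2
  have hle : ENNReal.ofReal (min 1 ε) * ν (Set.Ioi ε)
      ≤ ∫⁻ x in Set.Ioi (0:ℝ), ENNReal.ofReal (min 1 x) ∂ν := by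
    calc ENNReal.ofReal (min 1 ε) * ν (Set.Ioi ε)
        = ∫⁻ _ in Set.Ioi ε, ENNReal.ofReal (min 1 ε) ∂ν := by
          rw [setLIntegral_const, mul_comm]
      _ ≤ ∫⁻ x in Set.Ioi ε, ENNReal.ofReal (min 1 x) ∂ν := by
          apply setLIntegral_mono' measurableSet_Ioi
          intro x hx
          exact ENNReal.ofReal_le_ofReal (min_le_min le_rfl (le_of_lt hx))
      _ ≤ _ := lintegral_mono_set (Set.Ioi_subset_Ioi hε.le)
  rw [h, ENNReal.mul_top (by
    simp only [ne_eq, ENNReal.ofReal_eq_zero, not_le]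
    exact lt_min zero_lt_one hε)] at hle
  exact top_le_iff.1 hle

lemma exists_levyExponent_gt {ν : Measure ℝ} (hν : IsLevyMeasure ν) (ζ : ℝ) :
    ∃ v : ℝ, 0 < v ∧ ζ < levyExponent ν v := by
  have he1 : Real.exp (-1) < 1 := by
    rw [← Real.exp_zero]; exact Real.exp_lt_exp.2 (by norm_num)
  set κ : ℝ := 1 - Real.exp (-1) with hκ
  have hκpos : 0 < κ := by rw [hκ]; linarith
  set M : ℝ := (|ζ| + 1) / κ with hM
  -- find n with ν (Ioi (1/(n+1))) > ofReal M
  have hten : Tendsto (fun n : ℕ => ν (Set.Ioi (1 / (n + 1 : ℝ)))) atTop (nhds (ν (Set.Ioi (0:ℝ)))) := by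
    have := tendsto_measure_iUnion_atTop (μ := ν) (s := fun n : ℕ => Set.Ioi (1 / (n + 1 : ℝ)))
      (fun n m hnm => Set.Ioi_subset_Ioi (by
        apply one_div_le_one_div_of_le
        · positivity
        · exact_mod_cast Nat.add_le_add_right hnm 1))
    have hU : ⋃ n : ℕ, Set.Ioi (1 / (n + 1 : ℝ)) = Set.Ioi (0:ℝ) := by
      ext x
      simp only [Set.mem_iUnion, Set.mem_Ioi]
      constructor
      · rintro ⟨n, hn⟩
        exact lt_trans (by positivity) hn
      · intro hx
        obtain ⟨n, hn⟩ := exists_nat_one_div_lt hx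
        exact ⟨n, hn⟩
    rw [hU] at this
    exact this
  rw [hν.2.1] at hten
  have hev : ∀ᶠ n : ℕ in atTop, ENNReal.ofReal M < ν (Set.Ioi (1 / (n + 1 : ℝ))) :=
    hten.eventually_mem (Ioi_mem_nhds (by simp))
  obtain ⟨n, hn⟩ := hev.exists
  set ε : ℝ := 1 / (n + 1 : ℝ) with hε
  have hεpos : 0 < ε := by positivity
  refine ⟨(n + 1 : ℝ), by positivity, ?_⟩
  set v : ℝ := (n + 1 : ℝ)
  have hvpos : (0:ℝ) < v := by positivity
  have hfin : ν (Set.Ioi ε) ≠ ⊤ := (measure_Ioi_lt_top hν hεpos).ne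
  have hMlt : M < (ν (Set.Ioi ε)).toReal := by
    rw [← ENNReal.ofReal_lt_iff_lt_toReal (by positivity) hfin]
    exact hn
  have hint : IntegrableOn (fun x => 1 - Real.exp (-v * x)) (Set.Ioi 0) ν :=
    levy_integrable hν hvpos
  have hsub : Set.Ioi ε ⊆ Set.Ioi (0:ℝ) := Set.Ioi_subset_Ioi hεpos.le
  have h1 : ∫ x in Set.Ioi ε, (1 - Real.exp (-v * x)) ∂ν ≤ levyExponent ν v := by
    apply setIntegral_mono_set hint
    · filter_upwards [ae_restrict_mem measurableSet_Ioi] with x hx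
      exact integrand_nonneg hvpos.le (le_of_lt hx)
    · exact HasSubset.Subset.eventuallyLE hsub
  have h2 : κ * (ν (Set.Ioi ε)).toReal ≤ ∫ x in Set.Ioi ε, (1 - Real.exp (-v * x)) ∂ν := by
    apply setIntegral_ge_of_const_le_real measurableSet_Ioi hfin
    · intro x hx
      have hx' : 1 ≤ v * x := by
        have h3 : ε < x := hx
        rw [hε, div_lt_iff₀ (by positivity : (0:ℝ) < v)] at h3
        nlinarith
      have : Real.exp (-v * x) ≤ Real.exp (-1) :=
        Real.exp_le_exp.2 (by linarith)
      simp only [hκ]; linarith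
    · exact hint.mono_set hsub
  have : ζ < κ * (ν (Set.Ioi ε)).toReal := by
    have : κ * M < κ * (ν (Set.Ioi ε)).toReal := by
      exact mul_lt_mul_of_pos_left hMlt hκpos
    have hkM : κ * M = |ζ| + 1 := by
      rw [hM]; field_simp
    nlinarith [abs_nonneg ζ, le_abs_self ζ]
  linarith

section Pathwise

variable {Ω : Type*} {T : ℝ → Ω → ℝ} {ω : Ω} {t s : ℝ}

lemma invSub_nonneg : 0 ≤ invSub T t ω :=
  Real.sInf_nonneg (fun _ hx => hx.1.le)

lemma bddBelow_invSub_set : BddBelow {τ' : ℝ | 0 < τ' ∧ t < T τ' ω} :=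
  ⟨0, fun _ hx => hx.1.le⟩

/-- If `T s ω ≤ t` then `s ≤ S(t)`. -/
lemma le_invSub (hmono : MonotoneOn (fun r => T r ω) (Set.Ici 0))
    (hne : {τ' : ℝ | 0 < τ' ∧ t < T τ' ω}.Nonempty)
    (hs : 0 ≤ s) (hts : T s ω ≤ t) : s ≤ invSub T t ω := by
  apply le_csInf hne
  intro b hb
  by_contra hbs
  push_neg at hbs
  exact absurd (hmono (le_of_lt hb.1) hs hbs.le) (by
    simp only [not_le]
    exact lt_of_le_of_lt hts hb.2)

/-- If `T s ω < t` then `s < S(t)` (uses right-continuity). -/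
lemma lt_invSub (hmono : MonotoneOn (fun r => T r ω) (Set.Ici 0))
    (hrc : ContinuousWithinAt (fun r => T r ω) (Set.Ici s) s)
    (hne : {τ' : ℝ | 0 < τ' ∧ t < T τ' ω}.Nonempty)
    (hs : 0 ≤ s) (hts : T s ω < t) : s < invSub T t ω := by
  have hev : ∀ᶠ r in nhdsWithin s (Set.Ici s), T r ω < t :=
    hrc.eventually_lt_const hts
  have hmem : {r : ℝ | T r ω < t} ∈ nhdsWithin s (Set.Ici s) := hev
  rw [mem_nhdsGE_iff_exists_Ico_subset] at hmem
  obtain ⟨b, hb, hsub⟩ := hmem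
  have hbs : s < b := hb
  set r := (s + b) / 2 with hr
  have hrIco : r ∈ Set.Ico s b := ⟨by rw [hr]; linarith, by rw [hr]; linarith⟩
  have h1 : T r ω < t := hsub hrIco
  have h2 : s < r := by rw [hr]; linarith
  exact lt_of_lt_of_le h2 (le_invSub hmono hne (hs.trans h2.le) h1.le)

/-- If `s < S(t)` then `T s ω ≤ t`. -/
lemma invSub_le (h0 : T 0 ω = 0) (hmono : MonotoneOn (fun r => T r ω) (Set.Ici 0))
    (hs : 0 ≤ s) (h : s < invSub T t ω) : T s ω ≤ t := by
  by_contra h'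
  push_neg at h'
  rcases hs.lt_or_eq with hs0 | hs0
  · exact absurd (csInf_le bddBelow_invSub_set ⟨hs0, h'⟩) (not_le.2 h)
  · -- s = 0, so t < T 0 ω = 0
    subst hs0
    rw [h0] at h'
    have ht0 : t < 0 := h'
    have hS : 0 < invSub T t ω := h
    set a := invSub T t ω / 2 with ha
    have ha0 : 0 < a := by rw [ha]; linarith
    have haS : a < invSub T t ω := by rw [ha]; linarith
    have hmem : a ∈ {τ' : ℝ | 0 < τ' ∧ t < T τ' ω} := by
      refine ⟨ha0, lt_of_lt_of_le ht0 ?_⟩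
      have := hmono (Set.mem_Ici.2 (le_refl (0:ℝ))) (Set.mem_Ici.2 ha0.le) ha0.le
      simpa [h0] using this
    exact absurd (csInf_le bddBelow_invSub_set hmem) (not_le.2 haS)

/-- Rational characterisation of `S(t) < a`, valid when paths are monotone. -/
lemma invSub_lt_iff (hmono : MonotoneOn (fun r => T r ω) (Set.Ici 0)) (a : ℝ) :
    invSub T t ω < a ↔
      (∃ q : ℚ, 0 < (q:ℝ) ∧ (q:ℝ) < a ∧ t < T q ω) ∨
      ((∀ q : ℚ, 0 < (q:ℝ) → T q ω ≤ t) ∧ 0 < a) := by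
  set A := {τ' : ℝ | 0 < τ' ∧ t < T τ' ω} with hA
  rcases A.eq_empty_or_nonempty with hAe | hAne
  · have hS : invSub T t ω = 0 := by
      rw [invSub, ← hA, hAe, Real.sInf_empty]
    constructor
    · intro h
      refine Or.inr ⟨?_, by rw [hS] at h; exact h⟩
      intro q hq
      by_contra hq'
      push_neg at hq'
      exact absurd hAe (Set.nonempty_iff_ne_empty.1 ⟨(q:ℝ), hq, hq'⟩)
    · rintro (⟨q, hq0, _, hqt⟩ | ⟨_, ha⟩)
      · exact absurd hAe (Set.nonempty_iff_ne_empty.1 ⟨(q:ℝ), hq0, hqt⟩)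
      · rw [hS]; exact ha
  · constructor
    · intro h
      obtain ⟨b, hb, hba⟩ := exists_lt_of_csInf_lt hAne h
      obtain ⟨q, hq1, hq2⟩ := exists_rat_btwn hba
      refine Or.inl ⟨q, lt_trans hb.1 hq1, hq2, lt_of_lt_of_le hb.2 ?_⟩
      exact hmono hb.1.le (le_of_lt (lt_trans hb.1 hq1)) hq1.le
    · rintro (⟨q, hq0, hqa, hqt⟩ | ⟨hall, _⟩)
      · exact lt_of_le_of_lt (csInf_le bddBelow_invSub_set ⟨hq0, hqt⟩) hqa
      · obtain ⟨b, hb⟩ := hAne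
        obtain ⟨q, hq⟩ := exists_rat_gt b
        have : t < T q ω :=
          lt_of_lt_of_le hb.2 (hmono hb.1.le (hb.1.le.trans hq.le) hq.le)
        exact absurd this (not_lt.2 (hall q (lt_trans hb.1 hq)))

end Pathwise

section Meas

variable {Ω : Type*} [mΩ : MeasurableSpace Ω] {T : ℝ → Ω → ℝ}

private lemma measurableSet_and_const (p : Prop) {S : Set Ω} (hS : MeasurableSet S) :
    MeasurableSet {ω | p ∧ ω ∈ S} := by
  by_cases hp : p
  · simp only [hp, true_and]; exact hS
  · simp only [hp, false_and]; exact MeasurableSet.empty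

lemma measurable_invSub_indicator {G : Set Ω} (hGm : MeasurableSet G)
    (hTmeas : ∀ r : ℝ, Measurable (T r))
    (hmonoG : ∀ ω ∈ G, MonotoneOn (fun r => T r ω) (Set.Ici 0))
    (h : Ω → ℝ) (hh : Measurable h) :
    Measurable (G.indicator (fun ω => invSub T (h ω) ω)) := by
  classical
  apply measurable_of_Iio
  intro a
  have hU : MeasurableSet {ω : Ω | ∃ q : ℚ, 0 < (q:ℝ) ∧ (q:ℝ) < a ∧ h ω < T q ω} := by
    have : {ω : Ω | ∃ q : ℚ, 0 < (q:ℝ) ∧ (q:ℝ) < a ∧ h ω < T q ω}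
        = ⋃ q : ℚ, {ω : Ω | 0 < (q:ℝ) ∧ (ω ∈ {ω' : Ω | (q:ℝ) < a ∧ ω' ∈ {ω'' | h ω'' < T q ω''}})} := by
      ext ω; simp only [Set.mem_setOf_eq, Set.mem_iUnion]
    rw [this]
    refine MeasurableSet.iUnion fun q => measurableSet_and_const _ (measurableSet_and_const _ ?_)
    exact measurableSet_lt hh (hTmeas q)
  have hE : MeasurableSet {ω : Ω | ∀ q : ℚ, 0 < (q:ℝ) → T q ω ≤ h ω} := by
    have : {ω : Ω | ∀ q : ℚ, 0 < (q:ℝ) → T q ω ≤ h ω}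
        = ⋂ q : ℚ, {ω : Ω | 0 < (q:ℝ) → T q ω ≤ h ω} := by
      ext ω; simp only [Set.mem_setOf_eq, Set.mem_iInter]
    rw [this]
    refine MeasurableSet.iInter fun q => ?_
    by_cases hq : 0 < (q:ℝ)
    · simp only [hq, true_implies]
      exact measurableSet_le (hTmeas q) hh
    · simp only [hq, false_implies, Set.setOf_true]
      exact MeasurableSet.univ
  have hZ : MeasurableSet {ω : Ω | (0:ℝ) < a} := by
    by_cases h0a : (0:ℝ) < a
    · have : {ω : Ω | (0:ℝ) < a} = Set.univ := by ext ω; simp [h0a]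
      rw [this]; exact MeasurableSet.univ
    · have : {ω : Ω | (0:ℝ) < a} = ∅ := by ext ω; simp [h0a]
      rw [this]; exact MeasurableSet.empty
  have key : (G.indicator (fun ω => invSub T (h ω) ω)) ⁻¹' (Set.Iio a)
      = (Gᶜ ∩ {ω : Ω | (0:ℝ) < a}) ∪
        (G ∩ ({ω : Ω | ∃ q : ℚ, 0 < (q:ℝ) ∧ (q:ℝ) < a ∧ h ω < T q ω} ∪
          ({ω : Ω | ∀ q : ℚ, 0 < (q:ℝ) → T q ω ≤ h ω} ∩ {ω : Ω | (0:ℝ) < a}))) := by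
    ext ω
    by_cases hωG : ω ∈ G
    · simp only [Set.mem_preimage, Set.mem_Iio, Set.indicator_of_mem hωG, Set.mem_union,
        Set.mem_inter_iff, Set.mem_compl_iff, hωG, not_true_eq_false, false_and, false_or,
        true_and, Set.mem_setOf_eq]
      rw [invSub_lt_iff (hmonoG ω hωG) a]
    · simp only [Set.mem_preimage, Set.mem_Iio, Set.indicator_of_notMem hωG, Set.mem_union,
        Set.mem_inter_iff, Set.mem_compl_iff, hωG, not_false_eq_true, true_and, false_and,
        or_false, Set.mem_setOf_eq]
  rw [key]
  exact ((hGm.compl.inter hZ).union (hGm.inter (hU.union (hE.inter hZ))))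

end Meas

section Prob

variable {Ω : Type*} [mΩ : MeasurableSpace Ω] {P : Measure Ω} [IsProbabilityMeasure P]
  {u : ℝ} {τ : Ω → ℝ}

lemma tau_tail_ge (hu : 0 < u) (hτm : Measurable τ)
    (hτdist : ∀ x : ℝ, 0 ≤ x → P {ω | x < τ ω} = ENNReal.ofReal (Real.exp (-u * x)))
    {x : ℝ} (hx : 0 ≤ x) :
    P {ω | x ≤ τ ω} = ENNReal.ofReal (Real.exp (-u * x)) := by
  rcases hx.lt_or_eq with hx0 | hx0
  · -- x > 0
    set s : ℕ → Set Ω := fun n => {ω | x - x / (n + 2 : ℝ) < τ ω} with hs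
    have hxd : ∀ n : ℕ, 0 ≤ x - x / (n + 2 : ℝ) := by
      intro n
      have h1 : x / (n + 2 : ℝ) ≤ x / 1 := by
        apply div_le_div_of_nonneg_left hx0.le one_pos
        have : (0:ℝ) ≤ (n:ℝ) := Nat.cast_nonneg n
        linarith
      simp only [div_one] at h1
      linarith
    have hanti : Antitone s := by
      intro n m hnm ω hω
      simp only [hs, Set.mem_setOf_eq] at hω ⊢
      have : x / (m + 2 : ℝ) ≤ x / (n + 2 : ℝ) := by
        apply div_le_div_of_nonneg_left hx0.le (by positivity)
        have : (n:ℝ) ≤ m := Nat.cast_le.2 hnm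
        linarith
      linarith
    have hiInt : ⋂ n, s n = {ω | x ≤ τ ω} := by
      ext ω
      simp only [Set.mem_iInter, hs, Set.mem_setOf_eq]
      constructor
      · intro hall
        by_contra hlt
        push_neg at hlt
        obtain ⟨n, hn⟩ := exists_nat_one_div_lt (show 0 < (x - τ ω) / x from div_pos (by linarith) hx0)
        have h2 : x / (n + 2 : ℝ) < x - τ ω := by
          have h3 : x / (n + 2 : ℝ) ≤ x / (n + 1 : ℝ) := by
            apply div_le_div_of_nonneg_left hx0.le (by positivity)
            linarith
          have h4 : x / (n + 1 : ℝ) = x * (1 / (n + 1 : ℝ)) := by ring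
          have h5 : x * (1 / (n + 1 : ℝ)) < x * ((x - τ ω) / x) :=
            mul_lt_mul_of_pos_left hn hx0
          have h6 : x * ((x - τ ω) / x) = x - τ ω := by field_simp
          linarith
        linarith [hall n]
      · intro hge n
        have := hxd n
        have h7 : 0 < x / (n + 2 : ℝ) := by positivity
        linarith
    have htend := tendsto_measure_iInter_atTop (μ := P) (s := s)
      (fun n => (hτm measurableSet_Ioi).nullMeasurableSet) hanti
      ⟨0, measure_ne_top P _⟩
    rw [hiInt] at htend
    have hval : ∀ n : ℕ, P (s n) = ENNReal.ofReal (Real.exp (-u * (x - x / (n + 2 : ℝ)))) :=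
      fun n => hτdist _ (hxd n)
    have htend2 : Tendsto (fun n : ℕ => P (s n)) atTop
        (nhds (ENNReal.ofReal (Real.exp (-u * x)))) := by
      simp_rw [hval]
      have hd : Tendsto (fun n : ℕ => x / (n + 2 : ℝ)) atTop (nhds 0) := by
        apply Tendsto.div_atTop (tendsto_const_nhds (x := x))
        exact tendsto_atTop_add_const_right _ 2 tendsto_natCast_atTop_atTop
      have h8 : Tendsto (fun n : ℕ => x - x / (n + 2 : ℝ)) atTop (nhds x) := by
        simpa using tendsto_const_nhds.sub hd
      have h9 : Tendsto (fun n : ℕ => -u * (x - x / (n + 2 : ℝ))) atTop (nhds (-u * x)) :=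
        tendsto_const_nhds.mul h8
      exact (ENNReal.continuous_ofReal.tendsto _).comp ((Real.continuous_exp.tendsto _).comp h9)
    exact tendsto_nhds_unique htend htend2
  · -- x = 0
    subst hx0
    apply le_antisymm
    · simp only [neg_zero, zero_mul, mul_zero, Real.exp_zero, ENNReal.ofReal_one]
      exact prob_le_one
    · calc ENNReal.ofReal (Real.exp (-u * 0)) = P {ω | 0 < τ ω} := (hτdist 0 le_rfl).symm
        _ ≤ P {ω | 0 ≤ τ ω} := measure_mono (fun ω hω => by
            simp only [Set.mem_setOf_eq] at hω ⊢; linarith)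

lemma meas_X_lt_tau (hu : 0 < u) (hτm : Measurable τ)
    (hτdist : ∀ x : ℝ, 0 ≤ x → P {ω | x < τ ω} = ENNReal.ofReal (Real.exp (-u * x)))
    {X : Ω → ℝ} (hX : Measurable X) (hX0 : 0 ≤ᵐ[P] X) (hind : IndepFun X τ P) :
    P {ω | X ω < τ ω} = ENNReal.ofReal (∫ ω, Real.exp (-u * X ω) ∂P) := by
  have hmap : P.map (fun ω => (X ω, τ ω)) = (P.map X).prod (P.map τ) :=
    (ProbabilityTheory.indepFun_iff_map_prod_eq_prod_map_map hX.aemeasurable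
      hτm.aemeasurable).mp hind
  have hset : MeasurableSet {p : ℝ × ℝ | p.1 < p.2} :=
    measurableSet_lt measurable_fst measurable_snd
  have h1 : P {ω | X ω < τ ω} = (P.map (fun ω => (X ω, τ ω))) {p : ℝ × ℝ | p.1 < p.2} := by
    rw [Measure.map_apply (hX.prodMk hτm) hset]
    rfl
  have hint : Integrable (fun ω => Real.exp (-u * X ω)) P := by
    apply Integrable.mono' (integrable_const (1:ℝ))
    · exact (Real.continuous_exp.comp (continuous_const.mul continuous_id)).measurable.comp hX
        |>.aestronglyMeasurable
    · filter_upwards [hX0] with ω hω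
      simp only [Pi.zero_apply] at hω
      rw [Real.norm_eq_abs, abs_of_nonneg (Real.exp_pos _).le, ← Real.exp_zero]
      exact Real.exp_le_exp.2 (by nlinarith)
  have hnn : 0 ≤ᵐ[P] fun ω => Real.exp (-u * X ω) :=
    Filter.Eventually.of_forall fun ω => (Real.exp_pos _).le
  rw [h1, hmap, Measure.prod_apply hset]
  have hae : ∀ᵐ x ∂(P.map X), 0 ≤ x := by
    rw [ae_map_iff hX.aemeasurable (measurableSet_Ici (a := (0:ℝ)))]
    exact hX0
  calc ∫⁻ x, (P.map τ) (Prod.mk x ⁻¹' {p : ℝ × ℝ | p.1 < p.2}) ∂(P.map X)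
      = ∫⁻ x, ENNReal.ofReal (Real.exp (-u * x)) ∂(P.map X) := by
        apply lintegral_congr_ae
        filter_upwards [hae] with x hx
        have h2 : Prod.mk x ⁻¹' {p : ℝ × ℝ | p.1 < p.2} = Set.Ioi x := rfl
        rw [h2, Measure.map_apply hτm measurableSet_Ioi]
        exact hτdist x hx
    _ = ∫⁻ ω, ENNReal.ofReal (Real.exp (-u * X ω)) ∂P := by
        have hm : Measurable fun x : ℝ => ENNReal.ofReal (Real.exp (-u * x)) := by
          apply ENNReal.measurable_ofReal.comp
          exact (Real.continuous_exp.comp (continuous_const.mul continuous_id)).measurable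
        rw [lintegral_map hm hX]
    _ = ENNReal.ofReal (∫ ω, Real.exp (-u * X ω) ∂P) :=
        (ofReal_integral_eq_lintegral_ofReal hint hnn).symm

lemma meas_X_le_tau (hu : 0 < u) (hτm : Measurable τ)
    (hτdist : ∀ x : ℝ, 0 ≤ x → P {ω | x < τ ω} = ENNReal.ofReal (Real.exp (-u * x)))
    {X : Ω → ℝ} (hX : Measurable X) (hX0 : 0 ≤ᵐ[P] X) (hind : IndepFun X τ P) :
    P {ω | X ω ≤ τ ω} = ENNReal.ofReal (∫ ω, Real.exp (-u * X ω) ∂P) := by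
  have hmap : P.map (fun ω => (X ω, τ ω)) = (P.map X).prod (P.map τ) :=
    (ProbabilityTheory.indepFun_iff_map_prod_eq_prod_map_map hX.aemeasurable
      hτm.aemeasurable).mp hind
  have hset : MeasurableSet {p : ℝ × ℝ | p.1 ≤ p.2} :=
    measurableSet_le measurable_fst measurable_snd
  have h1 : P {ω | X ω ≤ τ ω} = (P.map (fun ω => (X ω, τ ω))) {p : ℝ × ℝ | p.1 ≤ p.2} := by
    rw [Measure.map_apply (hX.prodMk hτm) hset]
    rfl
  have hint : Integrable (fun ω => Real.exp (-u * X ω)) P := by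
    apply Integrable.mono' (integrable_const (1:ℝ))
    · exact (Real.continuous_exp.comp (continuous_const.mul continuous_id)).measurable.comp hX
        |>.aestronglyMeasurable
    · filter_upwards [hX0] with ω hω
      simp only [Pi.zero_apply] at hω
      rw [Real.norm_eq_abs, abs_of_nonneg (Real.exp_pos _).le, ← Real.exp_zero]
      exact Real.exp_le_exp.2 (by nlinarith)
  have hnn : 0 ≤ᵐ[P] fun ω => Real.exp (-u * X ω) :=
    Filter.Eventually.of_forall fun ω => (Real.exp_pos _).le
  rw [h1, hmap, Measure.prod_apply hset]
  have hae : ∀ᵐ x ∂(P.map X), 0 ≤ x := by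
    rw [ae_map_iff hX.aemeasurable (measurableSet_Ici (a := (0:ℝ)))]
    exact hX0
  calc ∫⁻ x, (P.map τ) (Prod.mk x ⁻¹' {p : ℝ × ℝ | p.1 ≤ p.2}) ∂(P.map X)
      = ∫⁻ x, ENNReal.ofReal (Real.exp (-u * x)) ∂(P.map X) := by
        apply lintegral_congr_ae
        filter_upwards [hae] with x hx
        have h2 : Prod.mk x ⁻¹' {p : ℝ × ℝ | p.1 ≤ p.2} = Set.Ici x := rfl
        rw [h2, Measure.map_apply hτm measurableSet_Ici]
        exact tau_tail_ge hu hτm hτdist hx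
    _ = ∫⁻ ω, ENNReal.ofReal (Real.exp (-u * X ω)) ∂P := by
        have hm : Measurable fun x : ℝ => ENNReal.ofReal (Real.exp (-u * x)) := by
          apply ENNReal.measurable_ofReal.comp
          exact (Real.continuous_exp.comp (continuous_const.mul continuous_id)).measurable
        rw [lintegral_map hm hX]
    _ = ENNReal.ofReal (∫ ω, Real.exp (-u * X ω) ∂P) :=
        (ofReal_integral_eq_lintegral_ofReal hint hnn).symm

end Prob

end InvSubAux

set_option maxHeartbeats 1000000 in
open InvSubAux in
theorem invSub_exponential_moments'
    {Ω : Type*} [mΩ : MeasurableSpace Ω] (P : Measure Ω) [IsProbabilityMeasure P]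
    (T : ℝ → Ω → ℝ) (ν : Measure ℝ)
    (hTmeas : ∀ t, Measurable (T t))
    (hTstart : ∀ᵐ ω ∂P, T 0 ω = 0)
    (hTmono : ∀ᵐ ω ∂P, MonotoneOn (fun t => T t ω) (Set.Ici 0))
    (hTrc : ∀ᵐ ω ∂P, ∀ t ∈ Set.Ici (0 : ℝ),
      ContinuousWithinAt (fun s => T s ω) (Set.Ici t) t)
    (hν : IsLevyMeasure ν)
    (hLap : ∀ t : ℝ, 0 ≤ t → ∀ u : ℝ, 0 < u →
      ∫ ω, Real.exp (-u * T t ω) ∂P = Real.exp (-t * levyExponent ν u))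
    (u : ℝ) (hu : 0 < u) (τ : Ω → ℝ) (hτm : Measurable τ)
    (hτdist : ∀ x : ℝ, 0 ≤ x → P {ω | x < τ ω} = ENNReal.ofReal (Real.exp (-u * x)))
    (hτind : IndepFun τ (fun ω (t : ℝ) => T t ω) P)
    (ξ : ℝ) (hξ : ξ < levyExponent ν u) :
    (∫ ω, Real.exp (ξ * invSub T (τ ω) ω) ∂P =
      levyExponent ν u / (levyExponent ν u - ξ)) ∧
    (∀ t : ℝ, 0 < t → ∀ ζ : ℝ, 0 < ζ →
      Integrable (fun ω => Real.exp (ζ * invSub T t ω)) P) := by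
  classical
  set c := levyExponent ν u with hc
  have hcpos : 0 < c := levyExponent_pos hν hu
  have hcξ : 0 < c - ξ := by linarith
  -- independence of T s and τ
  have hTind : ∀ s : ℝ, IndepFun (T s) τ P := fun s =>
    hτind.symm.comp (measurable_pi_apply s) measurable_id
  -- a.e. nonnegativity of T s
  have hT0ae : ∀ s : ℝ, 0 ≤ s → 0 ≤ᵐ[P] T s := by
    intro s hs
    filter_upwards [hTstart, hTmono] with ω h0 hm
    have := hm (Set.mem_Ici.2 le_rfl) (Set.mem_Ici.2 hs) hs
    simp only [Pi.zero_apply]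
    simpa [h0] using this
  -- the two key probabilities
  have hLt : ∀ s : ℝ, 0 ≤ s →
      P {ω | T s ω < τ ω} = ENNReal.ofReal (Real.exp (-(s * c))) := by
    intro s hs
    rw [meas_X_lt_tau hu hτm hτdist (hTmeas s) (hT0ae s hs) (hTind s), hLap s hs u hu]
    ring_nf
    rw [hc]
  have hLe : ∀ s : ℝ, 0 ≤ s →
      P {ω | T s ω ≤ τ ω} = ENNReal.ofReal (Real.exp (-(s * c))) := by
    intro s hs
    rw [meas_X_le_tau hu hτm hτdist (hTmeas s) (hT0ae s hs) (hTind s), hLap s hs u hu]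
    ring_nf
    rw [hc]
  -- a.s. some T(n+1) exceeds τ
  have hAnull : P {ω | ∀ n : ℕ, T ((n:ℝ) + 1) ω ≤ τ ω} = 0 := by
    have hle : ∀ n : ℕ, P {ω | ∀ n : ℕ, T ((n:ℝ) + 1) ω ≤ τ ω}
        ≤ ENNReal.ofReal (Real.exp (-(((n:ℝ) + 1) * c))) := by
      intro n
      calc P {ω | ∀ n : ℕ, T ((n:ℝ) + 1) ω ≤ τ ω}
          ≤ P {ω | T ((n:ℝ) + 1) ω ≤ τ ω} := measure_mono (fun ω hω => hω n)
        _ = ENNReal.ofReal (Real.exp (-(((n:ℝ) + 1) * c))) := hLe _ (by positivity)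
    have htop : Tendsto (fun n : ℕ => ENNReal.ofReal (Real.exp (-(((n:ℝ) + 1) * c))))
        atTop (nhds 0) := by
      have h1 : Tendsto (fun n : ℕ => ((n:ℝ) + 1) * c) atTop atTop :=
        Tendsto.atTop_mul_const hcpos
          (tendsto_atTop_add_const_right atTop 1 tendsto_natCast_atTop_atTop)
      have h2 : Tendsto (fun n : ℕ => -(((n:ℝ) + 1) * c)) atTop atBot :=
        tendsto_neg_atTop_atBot.comp h1
      have h3 := Real.tendsto_exp_atBot.comp h2
      have h4 := (ENNReal.continuous_ofReal.tendsto 0).comp h3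
      rw [ENNReal.ofReal_zero] at h4
      exact h4
    have := ge_of_tendsto' htop hle
    simpa using this
  -- good set
  have hae : ∀ᵐ ω ∂P, (T 0 ω = 0 ∧ MonotoneOn (fun r => T r ω) (Set.Ici 0) ∧
      (∀ r ∈ Set.Ici (0:ℝ), ContinuousWithinAt (fun s' => T s' ω) (Set.Ici r) r)) ∧
      ∃ n : ℕ, τ ω < T ((n:ℝ) + 1) ω := by
    have h4 : ∀ᵐ ω ∂P, ∃ n : ℕ, τ ω < T ((n:ℝ) + 1) ω := by
      rw [ae_iff]
      have heq : {ω | ¬ ∃ n : ℕ, τ ω < T ((n:ℝ) + 1) ω}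
          = {ω | ∀ n : ℕ, T ((n:ℝ) + 1) ω ≤ τ ω} := by
        ext ω; simp only [Set.mem_setOf_eq, not_exists, not_lt]
      rw [heq]
      exact hAnull
    exact (hTstart.and (hTmono.and hTrc)).and h4
  obtain ⟨N, hNsub, hNm, hNnull⟩ := exists_measurable_superset_of_null (ae_iff.mp hae)
  set G : Set Ω := Nᶜ with hGdef
  have hGm : MeasurableSet G := hNm.compl
  have hGc : P Gᶜ = 0 := by rw [hGdef, compl_compl]; exact hNnull
  have hG : ∀ ω ∈ G, (T 0 ω = 0 ∧ MonotoneOn (fun r => T r ω) (Set.Ici 0) ∧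
      (∀ r ∈ Set.Ici (0:ℝ), ContinuousWithinAt (fun s' => T s' ω) (Set.Ici r) r)) ∧
      ∃ n : ℕ, τ ω < T ((n:ℝ) + 1) ω := by
    intro ω hω
    by_contra hcon
    exact hω (hNsub hcon)
  have hGae : ∀ᵐ ω ∂P, ω ∈ G := by
    rw [ae_iff]
    exact measure_mono_null (fun ω (hω : ¬ ω ∈ G) => hω) hGc
  have hmonoG : ∀ ω ∈ G, MonotoneOn (fun r => T r ω) (Set.Ici 0) :=
    fun ω hω => (hG ω hω).1.2.1
  have h0G : ∀ ω ∈ G, T 0 ω = 0 := fun ω hω => (hG ω hω).1.1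
  have hrcG : ∀ ω ∈ G, ∀ r ∈ Set.Ici (0:ℝ),
      ContinuousWithinAt (fun s' => T s' ω) (Set.Ici r) r := fun ω hω => (hG ω hω).1.2.2
  have hneG : ∀ ω ∈ G, {τ' : ℝ | 0 < τ' ∧ τ ω < T τ' ω}.Nonempty := by
    intro ω hω
    obtain ⟨n, hn⟩ := (hG ω hω).2
    exact ⟨(n:ℝ) + 1, by positivity, hn⟩
  -- the measurable version of S(τ)
  set Y : Ω → ℝ := G.indicator (fun ω => invSub T (τ ω) ω) with hYdef
  have hYmeas : Measurable Y :=
    measurable_invSub_indicator hGm hTmeas hmonoG τ hτm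
  have hYae : (fun ω => invSub T (τ ω) ω) =ᵐ[P] Y := by
    filter_upwards [hGae] with ω hω
    rw [hYdef, Set.indicator_of_mem hω]
  have hYnn : ∀ ω, 0 ≤ Y ω := by
    intro ω
    rw [hYdef]
    by_cases hω : ω ∈ G
    · rw [Set.indicator_of_mem hω]; exact invSub_nonneg
    · rw [Set.indicator_of_notMem hω]
  -- identification of Y on G
  have hYG : ∀ ω ∈ G, Y ω = invSub T (τ ω) ω := fun ω hω => by
    rw [hYdef, Set.indicator_of_mem hω]
  -- tail probabilities of Y
  have hTailLt : ∀ s : ℝ, 0 ≤ s →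
      P {ω | s < Y ω} = ENNReal.ofReal (Real.exp (-(s * c))) := by
    intro s hs
    apply le_antisymm
    · calc P {ω | s < Y ω} = P ({ω | s < Y ω} ∩ G) := (measure_inter_conull hGc).symm
        _ ≤ P {ω | T s ω ≤ τ ω} := by
            apply measure_mono
            rintro ω ⟨hω1, hω2⟩
            simp only [Set.mem_setOf_eq] at hω1 ⊢
            rw [hYG ω hω2] at hω1
            exact invSub_le (h0G ω hω2) (hmonoG ω hω2) hs hω1
        _ = ENNReal.ofReal (Real.exp (-(s * c))) := hLe s hs
    · calc ENNReal.ofReal (Real.exp (-(s * c))) = P {ω | T s ω < τ ω} := (hLt s hs).symm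
        _ = P ({ω | T s ω < τ ω} ∩ G) := (measure_inter_conull hGc).symm
        _ ≤ P {ω | s < Y ω} := by
            apply measure_mono
            rintro ω ⟨hω1, hω2⟩
            simp only [Set.mem_setOf_eq] at hω1 ⊢
            rw [hYG ω hω2]
            exact lt_invSub (hmonoG ω hω2) (hrcG ω hω2 s hs) (hneG ω hω2) hs hω1
  have hTailLe : ∀ s : ℝ, 0 < s →
      P {ω | s ≤ Y ω} = ENNReal.ofReal (Real.exp (-(s * c))) := by
    intro s hs
    apply le_antisymm
    · -- upper bound via limit along s - s/(n+2)
      have hub : ∀ n : ℕ, P {ω | s ≤ Y ω}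
          ≤ ENNReal.ofReal (Real.exp (-((s - s / ((n:ℝ) + 2)) * c))) := by
        intro n
        have hsn0 : 0 ≤ s - s / ((n:ℝ) + 2) := by
          have h1 : s / ((n:ℝ) + 2) ≤ s / 1 := by
            apply div_le_div_of_nonneg_left hs.le one_pos
            have : (0:ℝ) ≤ (n:ℝ) := Nat.cast_nonneg n
            linarith
          simp only [div_one] at h1
          linarith
        have hsn : s - s / ((n:ℝ) + 2) < s := by
          have : 0 < s / ((n:ℝ) + 2) := by positivity
          linarith
        calc P {ω | s ≤ Y ω} ≤ P {ω | s - s / ((n:ℝ) + 2) < Y ω} :=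
              measure_mono (fun ω hω => lt_of_lt_of_le hsn hω)
          _ = _ := hTailLt _ hsn0
      have htd : Tendsto (fun n : ℕ => ENNReal.ofReal (Real.exp (-((s - s / ((n:ℝ) + 2)) * c))))
          atTop (nhds (ENNReal.ofReal (Real.exp (-(s * c))))) := by
        have hd : Tendsto (fun n : ℕ => s / ((n:ℝ) + 2)) atTop (nhds 0) := by
          apply Tendsto.div_atTop (tendsto_const_nhds (x := s))
          exact tendsto_atTop_add_const_right _ 2 tendsto_natCast_atTop_atTop
        have h8 : Tendsto (fun n : ℕ => -((s - s / ((n:ℝ) + 2)) * c)) atTop (nhds (-(s * c))) := by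
          have : Tendsto (fun n : ℕ => s - s / ((n:ℝ) + 2)) atTop (nhds s) := by
            simpa using tendsto_const_nhds.sub hd
          have := (this.mul_const c).neg
          simpa using this
        exact (ENNReal.continuous_ofReal.tendsto _).comp ((Real.continuous_exp.tendsto _).comp h8)
      exact ge_of_tendsto' htd hub
    · calc ENNReal.ofReal (Real.exp (-(s * c))) = P {ω | T s ω ≤ τ ω} := (hLe s hs.le).symm
        _ = P ({ω | T s ω ≤ τ ω} ∩ G) := (measure_inter_conull hGc).symm
        _ ≤ P {ω | s ≤ Y ω} := by
            apply measure_mono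
            rintro ω ⟨hω1, hω2⟩
            simp only [Set.mem_setOf_eq] at hω1 ⊢
            rw [hYG ω hω2]
            exact le_invSub (hmonoG ω hω2) (hneG ω hω2) hs.le hω1
  have hTailNeg : ∀ s : ℝ, s ≤ 0 → P {ω | s < Y ω} = 1 := by
    intro s hs
    rcases hs.lt_or_eq with hs0 | hs0
    · have : {ω | s < Y ω} = Set.univ :=
        Set.eq_univ_of_forall fun ω => lt_of_lt_of_le hs0 (hYnn ω)
      rw [this, measure_univ]
    · subst hs0
      rw [hTailLt 0 le_rfl]
      simp
  constructor
  · -- Part 1 : E[exp (ξ S(τ))] = c/(c-ξ)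
    have hcongr : ∫ ω, Real.exp (ξ * invSub T (τ ω) ω) ∂P = ∫ ω, Real.exp (ξ * Y ω) ∂P :=
      integral_congr_ae (by filter_upwards [hYae] with ω h; rw [h])
    rw [hcongr]
    have hgm : Measurable fun ω => Real.exp (ξ * Y ω) :=
      Real.measurable_exp.comp (measurable_const.mul hYmeas)
    rcases lt_trichotomy ξ 0 with hξ0 | hξ0 | hξ0
    · -- ξ < 0
      have hξne : ξ ≠ 0 := hξ0.ne
      set p : ℝ := -(c / ξ) with hpdef
      have hppos : 0 < p := by
        rw [hpdef]
        have : c / ξ < 0 := div_neg_of_pos_of_neg hcpos hξ0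
        linarith
      rw [integral_eq_lintegral_of_nonneg_ae
        (Filter.Eventually.of_forall fun ω => (Real.exp_pos _).le) hgm.aestronglyMeasurable]
      rw [lintegral_eq_lintegral_meas_lt P
        (Filter.Eventually.of_forall fun ω => (Real.exp_pos _).le) hgm.aemeasurable]
      rw [← Set.Ioo_union_Ici_eq_Ioi (zero_lt_one (α := ℝ)),
        lintegral_union measurableSet_Ici (by
          rw [Set.disjoint_left]
          rintro x ⟨_, h2⟩ h3
          exact absurd h3 (not_le.2 h2))]
      have hIci : ∫⁻ t' in Set.Ici (1:ℝ), P {ω | t' < Real.exp (ξ * Y ω)} = 0 := by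
        have h0 : ∀ t' ∈ Set.Ici (1:ℝ), P {ω | t' < Real.exp (ξ * Y ω)} = (0:ℝ≥0∞) := by
          intro t' ht'
          have hemp : {ω | t' < Real.exp (ξ * Y ω)} = (∅ : Set Ω) := by
            ext ω
            simp only [Set.mem_setOf_eq, Set.mem_empty_iff_false, iff_false, not_lt]
            calc Real.exp (ξ * Y ω) ≤ Real.exp 0 :=
                  Real.exp_le_exp.2 (mul_nonpos_of_nonpos_of_nonneg hξ0.le (hYnn ω))
              _ = 1 := Real.exp_zero
              _ ≤ t' := ht'
          rw [hemp, measure_empty]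
        rw [setLIntegral_congr_fun (g := fun _ => (0:ℝ≥0∞)) measurableSet_Ici
          h0, lintegral_zero]
      have hIoo : ∫⁻ t' in Set.Ioo (0:ℝ) 1, P {ω | t' < Real.exp (ξ * Y ω)}
          = ENNReal.ofReal (1 - 1 / (p + 1)) := by
        have hcg : ∀ t' ∈ Set.Ioo (0:ℝ) 1, P {ω | t' < Real.exp (ξ * Y ω)}
            = ENNReal.ofReal (1 - t' ^ p) := by
          intro t' ht'
          have hkey : {ω | t' < Real.exp (ξ * Y ω)} = {ω | Y ω < Real.log t' / ξ} := by
            ext ω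
            simp only [Set.mem_setOf_eq]
            rw [lt_div_iff_of_neg hξ0, mul_comm, ← Real.log_lt_iff_lt_exp ht'.1]
          have hr : 0 < Real.log t' / ξ :=
            div_pos_of_neg_of_neg (Real.log_neg ht'.1 ht'.2) hξ0
          have hcompl : {ω | Y ω < Real.log t' / ξ} = {ω | Real.log t' / ξ ≤ Y ω}ᶜ := by
            ext ω; simp [not_le]
          have hrpow : Real.exp (-(Real.log t' / ξ * c)) = t' ^ p := by
            rw [Real.rpow_def_of_pos ht'.1]
            congr 1
            rw [hpdef]
            field_simp
          rw [hkey, hcompl, prob_compl_eq_one_sub (measurableSet_le measurable_const hYmeas),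
            hTailLe _ hr, hrpow, ← ENNReal.ofReal_one,
            ← ENNReal.ofReal_sub 1 (Real.rpow_nonneg ht'.1.le p)]
        rw [setLIntegral_congr_fun measurableSet_Ioo
          hcg]
        have hIrpow : IntegrableOn (fun t' : ℝ => t' ^ p) (Set.Ioo (0:ℝ) 1) volume := by
          have h := intervalIntegral.intervalIntegrable_rpow' (a := 0) (b := 1)
            (by linarith : (-1:ℝ) < p)
          rwa [intervalIntegrable_iff_integrableOn_Ioo_of_le zero_le_one] at h
        have hIone : IntegrableOn (fun _ : ℝ => (1:ℝ)) (Set.Ioo (0:ℝ) 1) volume := by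
          exact integrableOn_const (by rw [Real.volume_Ioo]; exact ENNReal.ofReal_ne_top)
        have hIsub : IntegrableOn (fun t' : ℝ => 1 - t' ^ p) (Set.Ioo (0:ℝ) 1) volume :=
          (hIone.sub hIrpow).congr (Filter.Eventually.of_forall fun x => rfl)
        rw [← ofReal_integral_eq_lintegral_ofReal hIsub ?nng]
        case nng =>
          filter_upwards [ae_restrict_mem measurableSet_Ioo] with t' ht'
          simp only [Pi.zero_apply, Pi.sub_apply]
          have : t' ^ p ≤ 1 := Real.rpow_le_one ht'.1.le ht'.2.le hppos.le
          linarith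
        congr 1
        have hval : ∫ t' in Set.Ioo (0:ℝ) 1, (1 - t' ^ p) = 1 - 1 / (p + 1) := by
          rw [← integral_Ioc_eq_integral_Ioo, ← intervalIntegral.integral_of_le zero_le_one]
          rw [intervalIntegral.integral_sub intervalIntegrable_const
            (intervalIntegral.intervalIntegrable_rpow' (by linarith : (-1:ℝ) < p))]
          rw [intervalIntegral.integral_const,
            integral_rpow (Or.inl (by linarith : (-1:ℝ) < p))]
          rw [Real.one_rpow, Real.zero_rpow (by positivity : p + 1 ≠ 0)]
          norm_num
        exact hval
      rw [hIoo, hIci, add_zero, ENNReal.toReal_ofReal ?nn2]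
      case nn2 =>
        have h1 : 1 / (p + 1) ≤ 1 := by
          rw [div_le_one (by positivity)]
          linarith
        linarith
      -- 1 - 1/(p+1) = c/(c-ξ)
      have hζc : c - ξ ≠ 0 := hcξ.ne'
      have hξc : ξ - c ≠ 0 := fun h => hζc (by linarith)
      have h2 : p + 1 = (ξ - c) / ξ := by
        rw [hpdef]
        field_simp
        linarith
      rw [h2, one_div_div, eq_div_iff hζc]
      field_simp
      ring
    · -- ξ = 0
      subst hξ0
      simp only [zero_mul, Real.exp_zero, sub_zero, integral_const, measure_univ,
        ENNReal.toReal_one, smul_eq_mul, mul_one, one_smul]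
      rw [div_self hcpos.ne']
      simp
    · -- ξ > 0
      have hξne : ξ ≠ 0 := hξ0.ne'
      set p : ℝ := c / ξ with hpdef
      have hp1 : 1 < p := by
        rw [hpdef, one_lt_div hξ0]
        exact hξ
      rw [integral_eq_lintegral_of_nonneg_ae
        (Filter.Eventually.of_forall fun ω => (Real.exp_pos _).le) hgm.aestronglyMeasurable]
      rw [lintegral_eq_lintegral_meas_lt P
        (Filter.Eventually.of_forall fun ω => (Real.exp_pos _).le) hgm.aemeasurable]
      rw [← Set.Ioc_union_Ioi_eq_Ioi (zero_le_one (α := ℝ)),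
        lintegral_union measurableSet_Ioi (Set.Ioc_disjoint_Ioi le_rfl)]
      have hIoc : ∫⁻ t' in Set.Ioc (0:ℝ) 1, P {ω | t' < Real.exp (ξ * Y ω)} = 1 := by
        have h1 : ∀ t' ∈ Set.Ioc (0:ℝ) 1, P {ω | t' < Real.exp (ξ * Y ω)} = (1:ℝ≥0∞) := by
          intro t' ht'
          have hkey : {ω | t' < Real.exp (ξ * Y ω)} = {ω | Real.log t' / ξ < Y ω} := by
            ext ω
            simp only [Set.mem_setOf_eq]
            constructor
            · intro h
              rw [div_lt_iff₀ hξ0, mul_comm]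
              exact (Real.log_lt_iff_lt_exp ht'.1).2 h
            · intro h
              apply (Real.log_lt_iff_lt_exp ht'.1).1
              rw [div_lt_iff₀ hξ0, mul_comm] at h
              exact h
          rw [hkey]
          apply hTailNeg
          apply div_nonpos_of_nonpos_of_nonneg _ hξ0.le
          exact Real.log_nonpos ht'.1.le ht'.2
        rw [setLIntegral_congr_fun (g := fun _ => (1:ℝ≥0∞)) measurableSet_Ioc
          h1, setLIntegral_const, one_mul, Real.volume_Ioc]
        simp
      have hIoi : ∫⁻ t' in Set.Ioi (1:ℝ), P {ω | t' < Real.exp (ξ * Y ω)}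
          = ENNReal.ofReal (1 / (p - 1)) := by
        have hcg : ∀ t' ∈ Set.Ioi (1:ℝ), P {ω | t' < Real.exp (ξ * Y ω)}
            = ENNReal.ofReal (t' ^ (-p)) := by
          intro t' ht'
          have ht'1 : (1:ℝ) < t' := ht'
          have ht'0 : (0:ℝ) < t' := lt_trans one_pos ht'1
          have hkey : {ω | t' < Real.exp (ξ * Y ω)} = {ω | Real.log t' / ξ < Y ω} := by
            ext ω
            simp only [Set.mem_setOf_eq]
            constructor
            · intro h
              rw [div_lt_iff₀ hξ0, mul_comm]
              exact (Real.log_lt_iff_lt_exp ht'0).2 h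
            · intro h
              apply (Real.log_lt_iff_lt_exp ht'0).1
              rw [div_lt_iff₀ hξ0, mul_comm] at h
              exact h
          have hlr : 0 ≤ Real.log t' / ξ :=
            div_nonneg (Real.log_nonneg ht'1.le) hξ0.le
          rw [hkey, hTailLt _ hlr]
          congr 1
          rw [Real.rpow_def_of_pos ht'0]
          congr 1
          rw [hpdef]
          field_simp
        rw [setLIntegral_congr_fun measurableSet_Ioi hcg]
        rw [← ofReal_integral_eq_lintegral_ofReal
          (integrableOn_Ioi_rpow_of_lt (by linarith : -p < -1) one_pos) ?nng2]
        case nng2 =>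
          filter_upwards [ae_restrict_mem measurableSet_Ioi] with t' ht'
          exact Real.rpow_nonneg (le_of_lt (lt_trans one_pos ht')) _
        rw [integral_Ioi_rpow_of_lt (by linarith : -p < -1) one_pos]
        congr 1
        rw [Real.one_rpow]
        have h1 : -p + 1 = -(p - 1) := by ring
        rw [h1, div_neg, neg_div, neg_neg]
      rw [hIoc, hIoi, ENNReal.toReal_add ENNReal.one_ne_top ENNReal.ofReal_ne_top,
        ENNReal.toReal_one, ENNReal.toReal_ofReal
          (le_of_lt (div_pos one_pos (by linarith : (0:ℝ) < p - 1)))]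
      have hζc : c - ξ ≠ 0 := hcξ.ne'
      have h2 : p - 1 = (c - ξ) / ξ := by
        rw [hpdef]
        field_simp
      rw [h2, one_div_div, eq_div_iff hζc]
      field_simp
      ring
  · -- Part 2 : finite exponential moments
    intro t ht ζ hζ
    obtain ⟨v, hv, hvζ⟩ := exists_levyExponent_gt hν ζ
    set a := levyExponent ν v with hadef
    have hapos : 0 < a := levyExponent_pos hν hv
    set X : Ω → ℝ := G.indicator (fun ω => invSub T t ω) with hXdef
    have hXmeas : Measurable X :=
      measurable_invSub_indicator hGm hTmeas hmonoG (fun _ => t) measurable_const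
    have hXae : (fun ω => invSub T t ω) =ᵐ[P] X := by
      filter_upwards [hGae] with ω hω
      rw [hXdef, Set.indicator_of_mem hω]
    have hXnn : ∀ ω, 0 ≤ X ω := by
      intro ω
      rw [hXdef]
      by_cases hω : ω ∈ G
      · rw [Set.indicator_of_mem hω]; exact invSub_nonneg
      · rw [Set.indicator_of_notMem hω]
    have hXG : ∀ ω ∈ G, X ω = invSub T t ω := fun ω hω => by
      rw [hXdef, Set.indicator_of_mem hω]
    -- tail estimate via Markov
    have hTailX : ∀ s : ℝ, 0 ≤ s →
        P {ω | s < X ω} ≤ ENNReal.ofReal (Real.exp (v * t - s * a)) := by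
      intro s hs
      have hint : Integrable (fun ω => Real.exp (-v * T s ω)) P := by
        apply Integrable.mono' (integrable_const (1:ℝ))
        · exact (Real.continuous_exp.comp
            (continuous_const.mul continuous_id)).measurable.comp (hTmeas s)
            |>.aestronglyMeasurable
        · filter_upwards [hT0ae s hs] with ω hω
          simp only [Pi.zero_apply] at hω
          rw [Real.norm_eq_abs, abs_of_nonneg (Real.exp_pos _).le, ← Real.exp_zero]
          exact Real.exp_le_exp.2 (by nlinarith)
      have hintf : ∫⁻ ω, ENNReal.ofReal (Real.exp (-v * T s ω)) ∂P
          = ENNReal.ofReal (Real.exp (-(s * a))) := by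
        rw [← ofReal_integral_eq_lintegral_ofReal hint
          (Filter.Eventually.of_forall fun ω => (Real.exp_pos _).le)]
        rw [hLap s hs v hv]
        ring_nf
        rw [hadef]
      have hfm : Measurable fun ω => ENNReal.ofReal (Real.exp (-v * T s ω)) :=
        ENNReal.measurable_ofReal.comp ((Real.continuous_exp.comp
          (continuous_const.mul continuous_id)).measurable.comp (hTmeas s))
      have hmark := mul_meas_ge_le_lintegral₀ (μ := P) hfm.aemeasurable
        (ENNReal.ofReal (Real.exp (-(v * t))))
      rw [hintf] at hmark
      have hεne : ENNReal.ofReal (Real.exp (-(v * t))) ≠ 0 := by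
        simp only [ne_eq, ENNReal.ofReal_eq_zero, not_le]
        exact Real.exp_pos _
      have hεtop : ENNReal.ofReal (Real.exp (-(v * t))) ≠ ⊤ := ENNReal.ofReal_ne_top
      calc P {ω | s < X ω} = P ({ω | s < X ω} ∩ G) := (measure_inter_conull hGc).symm
        _ ≤ P {ω | T s ω ≤ t} := by
            apply measure_mono
            rintro ω ⟨hω1, hω2⟩
            simp only [Set.mem_setOf_eq] at hω1 ⊢
            rw [hXG ω hω2] at hω1
            exact invSub_le (h0G ω hω2) (hmonoG ω hω2) hs hω1
        _ ≤ P {ω | ENNReal.ofReal (Real.exp (-(v * t)))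
              ≤ ENNReal.ofReal (Real.exp (-v * T s ω))} := by
            apply measure_mono
            intro ω hω
            simp only [Set.mem_setOf_eq] at hω ⊢
            apply ENNReal.ofReal_le_ofReal
            apply Real.exp_le_exp.2
            nlinarith
        _ ≤ ENNReal.ofReal (Real.exp (-(s * a))) / ENNReal.ofReal (Real.exp (-(v * t))) := by
            rw [ENNReal.le_div_iff_mul_le (Or.inl hεne) (Or.inl hεtop), mul_comm]
            exact hmark
        _ = ENNReal.ofReal (Real.exp (v * t - s * a)) := by
            rw [← ENNReal.ofReal_div_of_pos (Real.exp_pos _), ← Real.exp_sub]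
            congr 1
            ring
    -- series bound for the exponential moment
    set K : ℝ := Real.exp (ζ + v * t + a) with hKdef
    set r : ℝ := Real.exp (ζ - a) with hrdef
    have hr1 : r < 1 := Real.exp_lt_one_iff.2 (by linarith)
    have hr0 : 0 ≤ r := (Real.exp_pos _).le
    have hberg : ∀ n : ℕ, P {ω | (n:ℝ) - 1 < X ω}
        ≤ ENNReal.ofReal (Real.exp (v * t + a - (n:ℝ) * a)) := by
      intro n
      cases n with
      | zero =>
        simp only [Nat.cast_zero, zero_mul, sub_zero]
        calc P {ω | (0:ℝ) - 1 < X ω} ≤ 1 := prob_le_one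
          _ ≤ ENNReal.ofReal (Real.exp (v * t + a)) := by
              rw [ENNReal.one_le_ofReal]
              apply Real.one_le_exp
              nlinarith
      | succ m =>
        have h1 : ((m + 1 : ℕ) : ℝ) - 1 = (m : ℝ) := by
          push_cast; ring
        rw [h1]
        calc P {ω | (m:ℝ) < X ω} ≤ ENNReal.ofReal (Real.exp (v * t - (m:ℝ) * a)) :=
              hTailX (m:ℝ) (Nat.cast_nonneg m)
          _ = ENNReal.ofReal (Real.exp (v * t + a - ((m + 1 : ℕ) : ℝ) * a)) := by
              congr 1
              push_cast
              ring
    have hptsum : ∀ ω, ENNReal.ofReal (Real.exp (ζ * X ω))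
        ≤ ∑' n : ℕ, Set.indicator {ω' | (n:ℝ) - 1 < X ω'}
            (fun _ => ENNReal.ofReal (Real.exp (ζ * ((n:ℝ) + 1)))) ω := by
      intro ω
      set n := ⌊X ω⌋₊ with hn
      have h1 : (n:ℝ) ≤ X ω := Nat.floor_le (hXnn ω)
      have h2 : X ω < (n:ℝ) + 1 := Nat.lt_floor_add_one _
      refine le_trans ?_ (ENNReal.le_tsum n)
      rw [Set.indicator_of_mem (show ω ∈ {ω' | (n:ℝ) - 1 < X ω'} by
        simp only [Set.mem_setOf_eq]; linarith)]
      apply ENNReal.ofReal_le_ofReal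
      apply Real.exp_le_exp.2
      nlinarith
    have hsum : ∫⁻ ω, ENNReal.ofReal (Real.exp (ζ * X ω)) ∂P < ⊤ := by
      have hstep : ∫⁻ ω, ENNReal.ofReal (Real.exp (ζ * X ω)) ∂P
          ≤ ∑' n : ℕ, ENNReal.ofReal (Real.exp (ζ * ((n:ℝ) + 1)))
              * P {ω | (n:ℝ) - 1 < X ω} := by
        calc ∫⁻ ω, ENNReal.ofReal (Real.exp (ζ * X ω)) ∂P
            ≤ ∫⁻ ω, ∑' n : ℕ, Set.indicator {ω' | (n:ℝ) - 1 < X ω'}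
                (fun _ => ENNReal.ofReal (Real.exp (ζ * ((n:ℝ) + 1)))) ω ∂P :=
              lintegral_mono hptsum
          _ = ∑' n : ℕ, ∫⁻ ω, Set.indicator {ω' | (n:ℝ) - 1 < X ω'}
                (fun _ => ENNReal.ofReal (Real.exp (ζ * ((n:ℝ) + 1)))) ω ∂P :=
              lintegral_tsum (fun n => (measurable_const.indicator
                (measurableSet_lt measurable_const hXmeas)).aemeasurable)
          _ = ∑' n : ℕ, ENNReal.ofReal (Real.exp (ζ * ((n:ℝ) + 1)))
                * P {ω | (n:ℝ) - 1 < X ω} := by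
              apply tsum_congr
              intro n
              rw [lintegral_indicator (measurableSet_lt measurable_const hXmeas),
                setLIntegral_const]
      have hterm : ∀ n : ℕ, ENNReal.ofReal (Real.exp (ζ * ((n:ℝ) + 1)))
          * P {ω | (n:ℝ) - 1 < X ω} ≤ ENNReal.ofReal K * ENNReal.ofReal r ^ n := by
        intro n
        calc ENNReal.ofReal (Real.exp (ζ * ((n:ℝ) + 1))) * P {ω | (n:ℝ) - 1 < X ω}
            ≤ ENNReal.ofReal (Real.exp (ζ * ((n:ℝ) + 1)))
                * ENNReal.ofReal (Real.exp (v * t + a - (n:ℝ) * a)) :=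
              mul_le_mul_right (hberg n) _
          _ = ENNReal.ofReal K * ENNReal.ofReal r ^ n := by
              rw [← ENNReal.ofReal_mul (Real.exp_pos _).le, ← Real.exp_add,
                ← ENNReal.ofReal_pow hr0, hKdef, hrdef, ← Real.exp_nat_mul,
                ← ENNReal.ofReal_mul (Real.exp_pos _).le, ← Real.exp_add]
              congr 1
              ring
      have hgeom : ∑' n : ℕ, ENNReal.ofReal K * ENNReal.ofReal r ^ n < ⊤ := by
        rw [ENNReal.tsum_mul_left, ENNReal.tsum_geometric]
        apply ENNReal.mul_lt_top ENNReal.ofReal_lt_top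
        rw [lt_top_iff_ne_top, ne_eq, ENNReal.inv_eq_top, tsub_eq_zero_iff_le]
        simp only [not_le]
        exact ENNReal.ofReal_lt_one.2 hr1
      exact lt_of_le_of_lt (hstep.trans (ENNReal.tsum_le_tsum hterm)) hgeom
    have hesm : Measurable fun ω => Real.exp (ζ * X ω) := by
      have : Continuous fun x : ℝ => Real.exp (ζ * x) :=
        Real.continuous_exp.comp (continuous_const.mul continuous_id)
      exact this.measurable.comp hXmeas
    constructor
    · exact hesm.aestronglyMeasurable.congr (by
        filter_upwards [hXae] with ω h
        rw [h])
    · rw [hasFiniteIntegral_iff_norm]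
      have : ∫⁻ ω, ENNReal.ofReal ‖Real.exp (ζ * invSub T t ω)‖ ∂P
          = ∫⁻ ω, ENNReal.ofReal (Real.exp (ζ * X ω)) ∂P := by
        apply lintegral_congr_ae
        filter_upwards [hXae] with ω h
        rw [h, Real.norm_eq_abs, abs_of_nonneg (Real.exp_pos _).le]
      rw [this]
      exact hsum

/-- Let `τ` be exponentially distributed with rate `u > 0`, independent of
the subordinator `T`, and let `ξ < f(u)`.  Then `E[exp(ξ S(τ))] = f(u)/(f(u) - ξ)`.
In particular, `S(t)` has finite exponential moments of all orders: for every `t > 0` and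
`ξ > 0`, `E[exp(ξ S(t))] < ∞`. -/
theorem invSub_exponential_moments
    {Ω : Type*} [mΩ : MeasurableSpace Ω] (P : Measure Ω) [IsProbabilityMeasure P]
    (T : ℝ → Ω → ℝ) (ν : Measure ℝ)
    (hT : IsSubordinatorProc P T) (hν : IsLevyMeasure ν)
    (hLap : HasLaplaceExponent P T (levyExponent ν))
    (u : ℝ) (hu : 0 < u) (τ : Ω → ℝ) (hτm : Measurable τ)
    (hτdist : ∀ x : ℝ, 0 ≤ x → P {ω | x < τ ω} = ENNReal.ofReal (Real.exp (-u * x)))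
    (hτind : IndepFun τ (fun ω (t : ℝ) => T t ω) P)
    (ξ : ℝ) (hξ : ξ < levyExponent ν u) :
    (∫ ω, Real.exp (ξ * invSub T (τ ω) ω) ∂P =
      levyExponent ν u / (levyExponent ν u - ξ)) ∧
    (∀ t : ℝ, 0 < t → ∀ ζ : ℝ, 0 < ζ →
      Integrable (fun ω => Real.exp (ζ * invSub T t ω)) P) := by
  exact invSub_exponential_moments' P T ν hT.meas hT.start hT.mono hT.rightCont hν hLap
    u hu τ hτm hτdist hτind ξ hξ
end
end

section
/- Let X*(t) = sup_{s∈[0,t]} X(s) = B*(S(t)), where B*(τ) = sup_{s∈[0,τ]} B(s), and let S_{1/2}(t) = inf{τ > 0 : B*(τ) > t}. Then for every t ≥ 0, X*(t) = inf{ τ > 0 : T( S_{1/2}(τ) ) > t } almost surely; i.e., the running supremum of X is the inverse of the subordinator T ∘ S_{1/2}. -/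
open MeasureTheory ProbabilityTheory Filter Set

noncomputable section

/-- The running supremum `B*(τ) = sup_{s ∈ [0,τ]} B(s)` of a process `B`. -/
def runSup {Ω : Type*} (B : ℝ → Ω → ℝ) (τ : ℝ) (ω : Ω) : ℝ :=
  sSup ((fun s => B s ω) '' Set.Icc 0 τ)

set_option linter.unusedSectionVars false
set_option linter.unnecessarySimpa false
set_option maxHeartbeats 1000000

namespace Stmt18

variable {ν : Measure ℝ}

lemma levy_integrable (hν : IsLevyMeasure ν) {u : ℝ} (hu : 0 ≤ u) :
    IntegrableOn (fun x : ℝ => 1 - Real.exp (-u * x)) (Set.Ioi 0) ν := by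
  obtain ⟨-, -, hfin⟩ := hν
  refine ⟨(Continuous.aestronglyMeasurable (by continuity)), ?_⟩
  rw [hasFiniteIntegral_iff_norm]
  have hb : ∫⁻ x in Set.Ioi (0:ℝ), ENNReal.ofReal ‖1 - Real.exp (-u*x)‖ ∂ν
      ≤ ∫⁻ x in Set.Ioi (0:ℝ), ENNReal.ofReal (max 1 u) * ENNReal.ofReal (min 1 x) ∂ν := by
    refine lintegral_mono_ae ((ae_restrict_iff' measurableSet_Ioi).2 (ae_of_all _ fun x hx => ?_))
    have hx0 : (0:ℝ) < x := hx
    have h1 : Real.exp (-u*x) ≤ 1 := Real.exp_le_one_iff.2 (by nlinarith)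
    have h2 : 1 - u * x ≤ Real.exp (-u*x) := by
      have := Real.add_one_le_exp (-(u*x)); rw [neg_mul]; linarith
    rw [← ENNReal.ofReal_mul (by positivity)]
    refine ENNReal.ofReal_le_ofReal ?_
    rw [Real.norm_eq_abs, abs_of_nonneg (by linarith)]
    rcases le_total x 1 with hx1 | hx1
    · rw [min_eq_right hx1]
      nlinarith [le_max_right (1:ℝ) u, le_max_left (1:ℝ) u]
    · rw [min_eq_left hx1]
      nlinarith [le_max_left (1:ℝ) u, Real.exp_pos (-u*x)]
  refine lt_of_le_of_lt hb ?_
  rw [lintegral_const_mul _ (show Measurable fun x : ℝ => ENNReal.ofReal (min 1 x) from (measurable_const.min measurable_id).ennreal_ofReal)]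
  exact ENNReal.mul_lt_top ENNReal.ofReal_lt_top (lt_top_iff_ne_top.2 hfin)

lemma levy_Ioi_lt_top (hν : IsLevyMeasure ν) {ε : ℝ} (hε : 0 < ε) : ν (Set.Ioi ε) < ⊤ := by
  obtain ⟨-, -, hfin⟩ := hν
  have h1 : ENNReal.ofReal (min 1 ε) * ν (Set.Ioi ε)
      ≤ ∫⁻ x in Set.Ioi (0:ℝ), ENNReal.ofReal (min 1 x) ∂ν := by
    calc ENNReal.ofReal (min 1 ε) * ν (Set.Ioi ε)
        = ∫⁻ _ in Set.Ioi ε, ENNReal.ofReal (min 1 ε) ∂ν := by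
          rw [setLIntegral_const, mul_comm]
      _ ≤ ∫⁻ x in Set.Ioi ε, ENNReal.ofReal (min 1 x) ∂ν := by
          refine setLIntegral_mono_ae
            ((show Measurable fun x : ℝ => ENNReal.ofReal (min 1 x) from (measurable_const.min measurable_id).ennreal_ofReal).aemeasurable)
            (ae_of_all _ fun x hx => ?_)
          exact ENNReal.ofReal_le_ofReal (min_le_min le_rfl (le_of_lt hx))
      _ ≤ ∫⁻ x in Set.Ioi (0:ℝ), ENNReal.ofReal (min 1 x) ∂ν := by
          exact lintegral_mono_set (Ioi_subset_Ioi hε.le)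
  by_contra h
  rw [not_lt, top_le_iff] at h
  have hne : ENNReal.ofReal (min 1 ε) ≠ 0 := by
    rw [Ne, ENNReal.ofReal_eq_zero, min_le_iff]; push_neg; exact ⟨one_pos, hε⟩
  rw [h, ENNReal.mul_top hne] at h1
  exact hfin (top_le_iff.1 h1)


lemma levy_lower (hν : IsLevyMeasure ν) {u ε : ℝ} (hu : 0 ≤ u) (hε : 0 < ε) :
    (1 - Real.exp (-u * ε)) * (ν (Set.Ioi ε)).toReal ≤ levyExponent ν u := by
  have hfin := levy_Ioi_lt_top hν hε
  have hint := levy_integrable hν hu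
  have hnneg : ∀ x : ℝ, 0 < x → 0 ≤ 1 - Real.exp (-u * x) := by
    intro x hx
    have h1 : Real.exp (-u*x) ≤ 1 := Real.exp_le_one_iff.2 (by nlinarith)
    linarith
  calc (1 - Real.exp (-u*ε)) * (ν (Set.Ioi ε)).toReal
      = ∫ _ in Set.Ioi ε, (1 - Real.exp (-u*ε)) ∂ν := by
        rw [setIntegral_const, smul_eq_mul, mul_comm]; rfl
    _ ≤ ∫ x in Set.Ioi ε, (1 - Real.exp (-u*x)) ∂ν := by
        refine setIntegral_mono_on (integrableOn_const hfin.ne)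
          (hint.mono_set (Ioi_subset_Ioi hε.le)) measurableSet_Ioi (fun x hx => ?_)
        have : Real.exp (-u*x) ≤ Real.exp (-u*ε) := by
          apply Real.exp_le_exp.2; rw [neg_mul, neg_mul, neg_le_neg_iff]
          exact mul_le_mul_of_nonneg_left (le_of_lt hx) hu
        linarith
    _ ≤ ∫ x in Set.Ioi (0:ℝ), (1 - Real.exp (-u*x)) ∂ν := by
        refine setIntegral_mono_set hint ?_ (HasSubset.Subset.eventuallyLE (Ioi_subset_Ioi hε.le))
        exact (ae_restrict_iff' measurableSet_Ioi).2 (ae_of_all _ fun x hx => hnneg x hx)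

lemma levy_tendsto (hν : IsLevyMeasure ν) : Tendsto (levyExponent ν) atTop atTop := by
  rw [tendsto_atTop]
  intro M
  obtain ⟨ε, hε, hR⟩ : ∃ ε : ℝ, 0 < ε ∧ 2 * max M 0 + 2 ≤ (ν (Set.Ioi ε)).toReal := by
    by_contra h
    push_neg at h
    have hcover : Set.Ioi (0:ℝ) = ⋃ k : ℕ, Set.Ioi (1/((k:ℝ)+1)) := by
      ext x
      simp only [mem_Ioi, mem_iUnion]
      constructor
      · intro hx
        obtain ⟨n, hn⟩ := exists_nat_one_div_lt hx
        exact ⟨n, hn⟩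
      · intro ⟨k, hk⟩
        exact lt_trans (by positivity) hk
    have hmono : Monotone (fun k : ℕ => Set.Ioi (1/((k:ℝ)+1))) := by
      intro a b hab
      apply Ioi_subset_Ioi
      have h1 : (a:ℝ) + 1 ≤ (b:ℝ) + 1 := by exact_mod_cast by omega
      exact one_div_le_one_div_of_le (by positivity) h1
    have htop := hν.2.1
    rw [hcover, hmono.measure_iUnion] at htop
    have hb : ∀ k : ℕ, ν (Set.Ioi (1/((k:ℝ)+1))) ≤ ENNReal.ofReal (2 * max M 0 + 2) := by
      intro k
      have hkpos : (0:ℝ) < 1/((k:ℝ)+1) := by positivity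
      have hfin := levy_Ioi_lt_top hν hkpos
      have := (h _ hkpos).le
      rw [← ENNReal.ofReal_toReal hfin.ne]
      exact ENNReal.ofReal_le_ofReal this
    have := iSup_le hb
    rw [htop, top_le_iff] at this
    exact (ENNReal.ofReal_lt_top.ne this).elim
  rw [eventually_atTop]
  refine ⟨1/ε, fun u hu => ?_⟩
  have hu0 : 0 ≤ u := le_trans (by positivity) hu
  have hb := levy_lower hν hu0 hε
  have hexp : Real.exp (-u*ε) ≤ 1/2 := by
    have h1 : (1:ℝ) ≤ u * ε := by
      rw [div_le_iff₀ hε] at hu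
      linarith
    calc Real.exp (-u*ε) ≤ Real.exp (-1) := by
          apply Real.exp_le_exp.2; rw [neg_mul]; linarith
      _ ≤ 1/2 := by
          have h2 : (2:ℝ) ≤ Real.exp 1 := by
            have := Real.add_one_le_exp 1; linarith
          rw [Real.exp_neg, inv_eq_one_div]
          exact one_div_le_one_div_of_le (by norm_num) h2
  have hRnn : (0:ℝ) ≤ 2 * max M 0 + 2 := by positivity
  nlinarith [le_max_left M 0, hb, hR, hexp]


section TSide

variable {Ω : Type*} [mΩ : MeasurableSpace Ω] {P : Measure Ω} [IsProbabilityMeasure P]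
  {T : ℝ → Ω → ℝ}

lemma T_nonneg (hT : IsSubordinatorProc P T) {r : ℝ} (hr : 0 ≤ r) :
    ∀ᵐ ω ∂P, 0 ≤ T r ω := by
  filter_upwards [hT.start, hT.mono] with ω h0 hm
  have := hm (self_mem_Ici) (mem_Ici.2 hr) hr
  simpa [h0] using this

lemma T_ne_zero (hT : IsSubordinatorProc P T) (hν : IsLevyMeasure ν)
    (hLap : HasLaplaceExponent P T (levyExponent ν)) {r : ℝ} (hr : 0 < r) :
    ∀ᵐ ω ∂P, T r ω ≠ 0 := by
  set S : Set Ω := {ω | T r ω = 0} with hS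
  have hSm : MeasurableSet S := (hT.meas r) (measurableSet_singleton 0)
  have hmeasn : ∀ n : ℕ, Measurable fun ω => Real.exp (-((n:ℝ)+1) * T r ω) :=
    fun n => ((hT.meas r).const_mul _).exp
  have hlim1 : Tendsto (fun n : ℕ => ∫ ω, Real.exp (-((n:ℝ)+1) * T r ω) ∂P) atTop
      (nhds (∫ ω, S.indicator (fun _ => (1:ℝ)) ω ∂P)) := by
    refine tendsto_integral_of_dominated_convergence (fun _ => (1:ℝ))
      (fun n => (hmeasn n).aestronglyMeasurable) (integrable_const 1) ?_ ?_
    · intro n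
      filter_upwards [T_nonneg hT hr.le] with ω hω
      rw [Real.norm_eq_abs, abs_of_nonneg (Real.exp_pos _).le]
      refine Real.exp_le_one_iff.2 ?_
      have : (0:ℝ) ≤ ((n:ℝ)+1) := by positivity
      nlinarith
    · filter_upwards [T_nonneg hT hr.le] with ω hω
      rcases eq_or_lt_of_le hω with h0 | h0
      · have hωS : ω ∈ S := by simp [hS, ← h0]
        simp only [indicator_of_mem hωS, ← h0]
        simpa using tendsto_const_nhds
      · have hωS : ω ∉ S := by simp [hS]; exact (ne_of_gt h0)
        rw [indicator_of_notMem hωS]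
        have heq : (fun n : ℕ => Real.exp (-((n:ℝ)+1) * T r ω))
            = fun n : ℕ => (Real.exp (-T r ω))^(n+1) := by
          funext n
          rw [← Real.exp_nat_mul]
          congr 1
          push_cast
          ring
        rw [heq]
        have h1 : Real.exp (-T r ω) < 1 := by
          rw [Real.exp_lt_one_iff]; linarith
        have h2 := tendsto_pow_atTop_nhds_zero_of_lt_one (Real.exp_pos _).le h1
        exact h2.comp (tendsto_add_atTop_nat 1)
  have hlim2 : Tendsto (fun n : ℕ => ∫ ω, Real.exp (-((n:ℝ)+1) * T r ω) ∂P) atTop (nhds 0) := by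
    have heq : (fun n : ℕ => ∫ ω, Real.exp (-((n:ℝ)+1) * T r ω) ∂P)
        = fun n : ℕ => Real.exp (-r * levyExponent ν ((n:ℝ)+1)) := by
      funext n
      exact hLap r hr.le _ (by positivity)
    rw [heq]
    apply Real.tendsto_exp_atBot.comp
    have h1 : Tendsto (fun n : ℕ => levyExponent ν ((n:ℝ)+1)) atTop atTop :=
      (levy_tendsto hν).comp (tendsto_atTop_add_const_right _ 1 tendsto_natCast_atTop_atTop)
    have h2 : Tendsto (fun x : ℝ => -r * x) atTop atBot := by
      have : Tendsto (fun x : ℝ => r * x) atTop atTop :=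
        (tendsto_const_mul_atTop_of_pos hr).2 tendsto_id
      have h3 := tendsto_neg_atTop_atBot.comp this
      exact h3.congr (fun x => by simp [Function.comp, neg_mul])
    exact (h2.comp h1).congr (fun n => by simp [Function.comp])
  have h0 : ∫ ω, S.indicator (fun _ => (1:ℝ)) ω ∂P = (P S).toReal := by
    rw [integral_indicator_const (1:ℝ) hSm]; simp [measureReal_def]
  have := tendsto_nhds_unique hlim1 hlim2
  rw [h0] at this
  have hPS : P S = 0 := by
    have := (ENNReal.toReal_eq_zero_iff _).1 this
    rcases this with h | h
    · exact h
    · exact absurd h (measure_ne_top P S)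
  rw [ae_iff]
  simpa [hS] using hPS


lemma T_strict (hT : IsSubordinatorProc P T) (hν : IsLevyMeasure ν)
    (hLap : HasLaplaceExponent P T (levyExponent ν)) :
    ∀ᵐ ω ∂P, StrictMonoOn (fun τ => T τ ω) (Set.Ici 0) := by
  have key : ∀ p : ℚ × ℚ, ∀ᵐ ω ∂P,
      (0 ≤ p.1 → p.1 < p.2 → T (p.1:ℝ) ω ≠ T (p.2:ℝ) ω) := by
    rintro ⟨q, r⟩
    by_cases hq : 0 ≤ q
    swap
    · filter_upwards with ω h; exact absurd h hq
    by_cases hqr : q < r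
    swap
    · filter_upwards with ω _ h; exact absurd h hqr
    have hrq : (0:ℝ) < (r:ℝ) - (q:ℝ) := by
      rw [sub_pos]; exact_mod_cast hqr
    have hmap := hT.statInc (q:ℝ) ((r:ℝ) - (q:ℝ)) (by exact_mod_cast hq) hrq.le
    have h2 : ((q:ℝ) + ((r:ℝ) - (q:ℝ))) = (r:ℝ) := by ring
    rw [h2] at hmap
    have hmeas : Measurable fun ω => T (r:ℝ) ω - T (q:ℝ) ω := (hT.meas _).sub (hT.meas _)
    have hzero : P ((fun ω => T (r:ℝ) ω - T (q:ℝ) ω) ⁻¹' {0}) = P (T ((r:ℝ)-(q:ℝ)) ⁻¹' {0}) := by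
      rw [← Measure.map_apply hmeas (measurableSet_singleton 0),
        ← Measure.map_apply (hT.meas _) (measurableSet_singleton 0), hmap]
    have hz := T_ne_zero hT hν hLap hrq
    rw [ae_iff] at hz
    have hz' : P (T ((r:ℝ)-(q:ℝ)) ⁻¹' {0}) = 0 := by
      convert hz using 2
      ext ω; simp
    rw [hz'] at hzero
    have : ∀ᵐ ω ∂P, T (r:ℝ) ω - T (q:ℝ) ω ≠ 0 := by
      rw [ae_iff]
      convert hzero using 2
      ext ω; simp
    filter_upwards [this] with ω h _ _
    intro hEq
    exact h (by rw [hEq]; ring)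
  have hall := ae_all_iff.2 key
  filter_upwards [hall, hT.mono] with ω hne hm
  intro a ha b hb hab
  obtain ⟨q, hq1, hq2⟩ := exists_rat_btwn hab
  obtain ⟨r, hr1, hr2⟩ := exists_rat_btwn hq2
  have h0q : (0:ℝ) ≤ (q:ℝ) := le_trans ha hq1.le
  have h0q' : (0 : ℚ) ≤ q := by exact_mod_cast h0q
  have hqr : q < r := by exact_mod_cast hr1
  have hqmem : (q:ℝ) ∈ Set.Ici (0:ℝ) := h0q
  have hrmem : (r:ℝ) ∈ Set.Ici (0:ℝ) := le_trans h0q hr1.le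
  calc T a ω ≤ T (q:ℝ) ω := hm ha hqmem hq1.le
    _ < T (r:ℝ) ω := lt_of_le_of_ne (hm hqmem hrmem hr1.le) (hne (q, r) h0q' hqr)
    _ ≤ T b ω := hm hrmem hb hr2.le

lemma T_unbounded (hT : IsSubordinatorProc P T) (hν : IsLevyMeasure ν)
    (hLap : HasLaplaceExponent P T (levyExponent ν)) {t : ℝ} (ht : 0 ≤ t) :
    ∀ᵐ ω ∂P, ∃ τ, 0 < τ ∧ t < T τ ω := by
  obtain ⟨u0, hu0pos, hfu0⟩ : ∃ u0 : ℝ, 0 < u0 ∧ 1 ≤ levyExponent ν u0 := by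
    have h1 := (levy_tendsto hν).eventually_ge_atTop 1
    have h2 := eventually_gt_atTop (0:ℝ)
    obtain ⟨u0, h1', h2'⟩ := (h2.and h1).exists
    exact ⟨u0, h1', h2'⟩
  set Bad : Set Ω := {ω | ¬ ∃ τ, 0 < τ ∧ t < T τ ω} with hBad
  have hbound : ∀ n : ℕ, (P Bad).toReal ≤ Real.exp (u0 * t) * Real.exp (-((n:ℝ)+1)) := by
    intro n
    set A : Set Ω := {ω | T ((n:ℝ)+1) ω ≤ t} with hA
    have hAm : MeasurableSet A := measurableSet_le (hT.meas _) measurable_const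
    have hint : Integrable (fun ω => Real.exp (-u0 * T ((n:ℝ)+1) ω)) P := by
      refine ⟨(((hT.meas _).const_mul _).exp).aestronglyMeasurable, ?_⟩
      refine HasFiniteIntegral.of_bounded (C := 1) ?_
      filter_upwards [T_nonneg hT (by positivity : (0:ℝ) ≤ (n:ℝ)+1)] with ω hω
      rw [Real.norm_eq_abs, abs_of_nonneg (Real.exp_pos _).le]
      refine Real.exp_le_one_iff.2 ?_
      nlinarith
    have hsub : Bad ⊆ A := by
      intro ω hω
      rw [hBad, mem_setOf_eq, not_exists] at hω
      have := hω ((n:ℝ)+1)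
      push_neg at this
      exact this (by positivity)
    have hPBA : (P Bad).toReal ≤ (P A).toReal :=
      ENNReal.toReal_mono (measure_ne_top P A) (measure_mono hsub)
    have hmarkov : (P A).toReal * Real.exp (-u0 * t) ≤ Real.exp (-((n:ℝ)+1) * levyExponent ν u0) := by
      calc (P A).toReal * Real.exp (-u0 * t)
          = ∫ _ in A, Real.exp (-u0 * t) ∂P := by
            rw [setIntegral_const, smul_eq_mul]; rfl
        _ ≤ ∫ ω in A, Real.exp (-u0 * T ((n:ℝ)+1) ω) ∂P := by
            refine setIntegral_mono_on (integrableOn_const (measure_lt_top _ _).ne)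
              hint.integrableOn hAm (fun ω hω => ?_)
            apply Real.exp_le_exp.2
            rw [neg_mul, neg_mul, neg_le_neg_iff]
            exact mul_le_mul_of_nonneg_left hω hu0pos.le
        _ ≤ ∫ ω, Real.exp (-u0 * T ((n:ℝ)+1) ω) ∂P :=
            setIntegral_le_integral hint (ae_of_all _ fun ω => (Real.exp_pos _).le)
        _ = Real.exp (-((n:ℝ)+1) * levyExponent ν u0) := hLap _ (by positivity) _ hu0pos
    have hePA : (P A).toReal ≤ Real.exp (u0 * t) * Real.exp (-((n:ℝ)+1) * levyExponent ν u0) := by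
      rw [← le_div_iff₀ (Real.exp_pos _)] at hmarkov
      calc (P A).toReal ≤ Real.exp (-((n:ℝ)+1) * levyExponent ν u0) / Real.exp (-u0 * t) :=
            hmarkov
        _ = Real.exp (u0 * t) * Real.exp (-((n:ℝ)+1) * levyExponent ν u0) := by
            rw [neg_mul u0 t, Real.exp_neg, div_inv_eq_mul]; ring
    refine le_trans (le_trans hPBA hePA) ?_
    have : Real.exp (-((n:ℝ)+1) * levyExponent ν u0) ≤ Real.exp (-((n:ℝ)+1)) := by
      apply Real.exp_le_exp.2
      have hn : (0:ℝ) ≤ (n:ℝ)+1 := by positivity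
      nlinarith
    nlinarith [Real.exp_pos (u0*t)]
  have hlim : Tendsto (fun n : ℕ => Real.exp (u0 * t) * Real.exp (-((n:ℝ)+1))) atTop (nhds 0) := by
    rw [show (0:ℝ) = Real.exp (u0*t) * 0 by ring]
    apply Tendsto.const_mul
    apply Real.tendsto_exp_atBot.comp
    have : Tendsto (fun n : ℕ => ((n:ℝ)+1)) atTop atTop :=
      tendsto_atTop_add_const_right _ 1 tendsto_natCast_atTop_atTop
    exact tendsto_neg_atTop_atBot.comp this
  have h0 : (P Bad).toReal ≤ 0 := ge_of_tendsto' hlim (fun n => hbound n)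
  have : P Bad = 0 := by
    have h1 := ENNReal.toReal_nonneg (a := P Bad)
    have h2 : (P Bad).toReal = 0 := le_antisymm h0 h1
    rcases (ENNReal.toReal_eq_zero_iff _).1 h2 with h | h
    · exact h
    · exact absurd h (measure_ne_top P Bad)
  rw [ae_iff]
  exact this

end TSide

section Pathwise

variable {g b : ℝ → ℝ} {t : ℝ}

/-- Pathwise core lemma. -/
lemma pathwise (ht : 0 ≤ t)
    (hg0 : g 0 = 0) (hgs : StrictMonoOn g (Set.Ici 0))
    (hgrc : ∀ τ ∈ Set.Ici (0:ℝ), ContinuousWithinAt g (Set.Ici τ) τ)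
    (hgub : ∃ τ, 0 < τ ∧ t < g τ)
    (hb0 : b 0 = 0) (hbc : Continuous b)
    (hbub : ∀ M : ℝ, ∃ σ, 0 < σ ∧ M < sSup (b '' Set.Icc 0 σ)) :
    (sSup ((fun s => b (sInf {τ | 0 < τ ∧ s < g τ})) '' Set.Icc 0 t)
        = sInf {τ | 0 < τ ∧ t < g (sInf {σ | 0 < σ ∧ τ < sSup (b '' Set.Icc 0 σ)})}) ∧
      sSup ((fun s => b (sInf {τ | 0 < τ ∧ s < g τ})) '' Set.Icc 0 t)
        = sSup (b '' Set.Icc 0 (sInf {τ | 0 < τ ∧ t < g τ})) := by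
  have hgmono : MonotoneOn g (Set.Ici 0) := hgs.monotoneOn
  set S : ℝ → ℝ := fun s => sInf {τ | 0 < τ ∧ s < g τ} with hSdef
  set bst : ℝ → ℝ := fun σ => sSup (b '' Set.Icc 0 σ) with hbstdef
  obtain ⟨τ₀, hτ₀pos, hτ₀⟩ := hgub
  -- basic facts about the sets D s
  have hDbdd : ∀ s : ℝ, BddBelow {τ | 0 < τ ∧ s < g τ} :=
    fun s => ⟨0, fun τ hτ => hτ.1.le⟩
  have hDne : ∀ s ≤ t, {τ | 0 < τ ∧ s < g τ}.Nonempty :=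
    fun s hs => ⟨τ₀, hτ₀pos, lt_of_le_of_lt hs hτ₀⟩
  have hSnonneg : ∀ s ≤ t, 0 ≤ S s := fun s hs =>
    le_csInf (hDne s hs) (fun τ hτ => hτ.1.le)
  have hSmono : ∀ s s' : ℝ, s ≤ s' → s' ≤ t → S s ≤ S s' := by
    intro s s' hss' hs't
    exact csInf_le_csInf (hDbdd s) (hDne s' hs't)
      (fun τ hτ => ⟨hτ.1, lt_of_le_of_lt hss' hτ.2⟩)
  -- bst facts
  have hbdd : ∀ σ : ℝ, BddAbove (b '' Set.Icc 0 σ) :=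
    fun σ => isCompact_Icc.bddAbove_image hbc.continuousOn
  have hbstmono : ∀ σ σ' : ℝ, 0 ≤ σ → σ ≤ σ' → bst σ ≤ bst σ' := by
    intro σ σ' h0 hσσ'
    exact csSup_le_csSup (hbdd σ') ⟨b 0, 0, ⟨le_refl 0, h0⟩, rfl⟩
      (image_mono (Icc_subset_Icc le_rfl hσσ'))
  have hbst_nonneg : ∀ σ : ℝ, 0 ≤ σ → 0 ≤ bst σ := by
    intro σ h0
    have : b 0 ∈ b '' Set.Icc 0 σ := ⟨0, ⟨le_refl 0, h0⟩, rfl⟩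
    have := le_csSup (hbdd σ) this
    rwa [hb0] at this
  have hbst_ge : ∀ σ s : ℝ, s ∈ Set.Icc 0 σ → b s ≤ bst σ :=
    fun σ s hs => le_csSup (hbdd σ) ⟨s, hs, rfl⟩
  -- image identity
  have himg : S '' Set.Icc 0 t = Set.Icc 0 (S t) := by
    apply Subset.antisymm
    · rintro _ ⟨s, hs, rfl⟩
      exact ⟨hSnonneg s hs.2, hSmono s t hs.2 le_rfl⟩
    · rintro u ⟨hu0, hut⟩
      rcases eq_or_lt_of_le hut with hEq | hlt
      · exact ⟨t, ⟨ht, le_rfl⟩, hEq.symm⟩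
      · refine ⟨g u, ⟨?_, ?_⟩, ?_⟩
        · have := hgmono (self_mem_Ici) (mem_Ici.2 hu0) hu0
          rwa [hg0] at this
        · by_contra h
          push_neg at h
          have hu0' : 0 < u := by
            rcases eq_or_lt_of_le hu0 with h0 | h0
            · exfalso; rw [← h0, hg0] at h; exact absurd ht (not_le.2 h)
            · exact h0
          have : S t ≤ u := csInf_le (hDbdd t) ⟨hu0', h⟩
          exact absurd hlt (not_lt.2 this)
        · show S (g u) = u
          have hset : {τ | 0 < τ ∧ g u < g τ} = Set.Ioi u := by
            ext τ
            simp only [mem_setOf_eq, mem_Ioi]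
            constructor
            · rintro ⟨hτ0, hgτ⟩
              by_contra h
              push_neg at h
              exact absurd (hgmono (mem_Ici.2 hτ0.le) (mem_Ici.2 hu0) h) (not_le.2 hgτ)
            · intro huτ
              have hτ0 : 0 < τ := lt_of_le_of_lt hu0 huτ
              exact ⟨hτ0, hgs (mem_Ici.2 hu0) (mem_Ici.2 hτ0.le) huτ⟩
          rw [hSdef]
          simp only
          rw [hset, csInf_Ioi]
  -- goal 2
  have hgoal2 : sSup ((fun s => b (S s)) '' Set.Icc 0 t) = bst (S t) := by
    have : (fun s => b (S s)) '' Set.Icc 0 t = b '' (S '' Set.Icc 0 t) :=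
      image_comp b S _
    rw [this, himg]
  refine ⟨?_, hgoal2⟩
  rw [hgoal2]
  -- now show bst (S t) = sInf A
  set St := S t with hStdef
  have hSt0 : 0 ≤ St := hSnonneg t le_rfl
  set S₂ : ℝ → ℝ := fun τ => sInf {σ | 0 < σ ∧ τ < bst σ} with hS₂def
  -- show t ≤ g St
  have hgSt : t ≤ g St := by
    by_contra h
    push_neg at h
    have hev : ∀ᶠ x in nhdsWithin St (Set.Ici St), g x < t :=
      (hgrc St hSt0).eventually_lt_const h
    have hev' : {x | g x < t} ∈ nhdsWithin St (Set.Ici St) := hev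
    obtain ⟨ε, hε, hball⟩ := Metric.mem_nhdsWithin_iff.1 hev'
    obtain ⟨τ, hτmem, hτlt⟩ := exists_lt_of_csInf_lt (hDne t le_rfl)
      (show sInf {τ | 0 < τ ∧ t < g τ} < St + ε from lt_add_of_pos_right St hε)
    have hτge : St ≤ τ := csInf_le (hDbdd t) hτmem
    have : g τ < t := by
      refine hball ⟨Metric.mem_ball.2 ?_, hτge⟩
      rw [Real.dist_eq, abs_of_nonneg (by linarith)]
      linarith
    exact absurd hτmem.2 (not_lt.2 this.le)
  -- witness construction
  have hwit : ∀ ε : ℝ, 0 < ε → ∃ τ, (0 < τ ∧ t < g (S₂ τ)) ∧ τ ≤ bst St + ε := by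
    intro ε hε
    obtain ⟨δ0, hδ0, hδ0prop⟩ := (Metric.uniformContinuousOn_iff.1
      (isCompact_Icc.uniformContinuousOn_of_continuous
        (hbc.continuousOn (s := Set.Icc 0 (St + 1))))) (ε/2) (by linarith)
    set δ := min (δ0/2) 1 with hδdef
    have hδpos : 0 < δ := lt_min (by linarith) one_pos
    have hδ1 : δ ≤ 1 := min_le_right _ _
    have hδδ0 : δ < δ0 := lt_of_le_of_lt (min_le_left _ _) (by linarith)
    have hb1 : bst (St + δ) ≤ bst St + ε/2 := by
      have hne : (b '' Set.Icc 0 (St + δ)).Nonempty :=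
        ⟨b 0, ⟨0, ⟨le_refl 0, by linarith⟩, rfl⟩⟩
      apply csSup_le hne
      rintro _ ⟨s, ⟨hs0, hsle⟩, rfl⟩
      rcases le_or_gt s St with hsSt | hsSt
      · have := hbst_ge St s ⟨hs0, hsSt⟩
        linarith
      · have hsK : s ∈ Set.Icc 0 (St + 1) := ⟨hs0, by linarith⟩
        have hStK : St ∈ Set.Icc 0 (St + 1) := ⟨hSt0, by linarith⟩
        have hdist : dist s St < δ0 := by
          rw [Real.dist_eq, abs_of_nonneg (by linarith)]
          linarith
        have := hδ0prop s hsK St hStK hdist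
        rw [Real.dist_eq] at this
        have habs := abs_lt.1 this
        have := hbst_ge St St ⟨hSt0, le_rfl⟩
        linarith [habs.2]
    refine ⟨bst (St + δ) + ε/2, ⟨?_, ?_⟩, by linarith⟩
    · have := hbst_nonneg (St + δ) (by linarith)
      linarith
    · -- t < g (S₂ τ) where τ = bst (St + δ) + ε/2
      set τ := bst (St + δ) + ε/2 with hτdef
      have hEelem : ∀ σ ∈ {σ | 0 < σ ∧ τ < bst σ}, St + δ ≤ σ := by
        intro σ hσ
        by_contra h
        push_neg at h
        have : bst σ ≤ bst (St + δ) := hbstmono σ _ hσ.1.le h.le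
        have : τ < bst (St + δ) := lt_of_lt_of_le hσ.2 this
        rw [hτdef] at this
        linarith
      have hEne : {σ | 0 < σ ∧ τ < bst σ}.Nonempty := hbub τ
      have hS₂ge : St + δ ≤ S₂ τ := le_csInf hEne hEelem
      have h1 : g St < g (St + δ) := hgs (mem_Ici.2 hSt0) (mem_Ici.2 (by linarith)) (by linarith)
      have h2 : g (St + δ) ≤ g (S₂ τ) :=
        hgmono (mem_Ici.2 (by linarith)) (mem_Ici.2 (by linarith)) hS₂ge
      linarith
  -- A nonempty and bddBelow
  have hAbdd : BddBelow {τ | 0 < τ ∧ t < g (S₂ τ)} := ⟨0, fun τ hτ => hτ.1.le⟩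
  have hAne : {τ | 0 < τ ∧ t < g (S₂ τ)}.Nonempty := by
    obtain ⟨τ, hτ, -⟩ := hwit 1 one_pos
    exact ⟨τ, hτ⟩
  apply le_antisymm
  · -- bst St ≤ sInf A
    apply le_csInf hAne
    rintro τ ⟨hτ0, hτA⟩
    by_contra h
    push_neg at h
    obtain ⟨y, ⟨s, hs, rfl⟩, hy⟩ := exists_lt_of_lt_csSup
      (⟨b 0, ⟨0, ⟨le_refl 0, hSt0⟩, rfl⟩⟩ : (b '' Set.Icc 0 St).Nonempty) h
    have hs0 : 0 < s := by
      rcases eq_or_lt_of_le hs.1 with h0 | h0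
      · exfalso; rw [← h0, hb0] at hy; linarith
      · exact h0
    -- find σ ∈ (0, St) with τ < bst σ
    obtain ⟨σ, hσ0, hσSt, hσbst⟩ : ∃ σ, 0 < σ ∧ σ < St ∧ τ < bst σ := by
      rcases lt_or_eq_of_le hs.2 with hsSt | hsSt
      · exact ⟨s, hs0, hsSt, lt_of_lt_of_le hy (hbst_ge s s ⟨hs.1, le_rfl⟩)⟩
      · -- s = St; use continuity of b at St
        have hSt0' : 0 < St := by rw [← hsSt]; exact hs0
        have hev : ∀ᶠ x in nhds St, τ < b x := by
          refine (hbc.tendsto St).eventually_const_lt ?_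
          rw [← hsSt]; exact hy
        rw [Metric.eventually_nhds_iff] at hev
        obtain ⟨ε, hε, hball⟩ := hev
        set x := max (St - ε/2) (St/2) with hxdef
        have hx0 : 0 < x := lt_of_lt_of_le (by linarith) (le_max_right _ _)
        have hxSt : x < St := max_lt (by linarith) (by linarith)
        have hxd : dist x St < ε := by
          rw [Real.dist_eq, abs_of_nonpos (by linarith)]
          have : St - ε/2 ≤ x := le_max_left _ _
          linarith
        have hbx := hball hxd
        exact ⟨x, hx0, hxSt, lt_of_lt_of_le hbx (hbst_ge x x ⟨hx0.le, le_rfl⟩)⟩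
    have hσE : σ ∈ {σ' | 0 < σ' ∧ τ < bst σ'} := ⟨hσ0, hσbst⟩
    have hS₂le : S₂ τ ≤ σ := csInf_le ⟨0, fun x hx => hx.1.le⟩ hσE
    have hS₂0 : 0 ≤ S₂ τ := le_csInf ⟨σ, hσE⟩ (fun x hx => hx.1.le)
    rcases eq_or_lt_of_le hS₂0 with h0 | h0
    · rw [← h0, hg0] at hτA
      linarith
    · have : St ≤ S₂ τ := csInf_le (hDbdd t) ⟨h0, hτA⟩
      linarith
  · -- sInf A ≤ bst St
    apply le_of_forall_pos_le_add
    intro ε hε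
    obtain ⟨τ, hτ, hτle⟩ := hwit ε hε
    exact le_trans (csInf_le hAbdd hτ) hτle

end Pathwise

section Gauss

lemma gauss_tail {M s : ℝ} (hM : 0 ≤ M) (hs : 3*M+3 ≤ s) :
    ENNReal.ofReal (1/10) ≤ gaussianReal 0 (Real.toNNReal (s^2)) (Set.Ioi M) := by
  have hs0 : 0 < s := by linarith
  set v : NNReal := Real.toNNReal (s^2) with hv
  have hvreal : (v:ℝ) = s^2 := Real.coe_toNNReal _ (by positivity)
  have hvne : v ≠ 0 := by
    intro h
    rw [h] at hvreal
    simp at hvreal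
    nlinarith
  have hmono : gaussianReal 0 v (Set.Ioc M (M+s)) ≤ gaussianReal 0 v (Set.Ioi M) :=
    measure_mono (fun x hx => hx.1)
  refine le_trans ?_ hmono
  rw [gaussianReal_apply_eq_integral 0 hvne]
  refine ENNReal.ofReal_le_ofReal ?_
  have hsqrtpos : 0 < Real.sqrt (2*Real.pi*v) := by
    apply Real.sqrt_pos.2
    have := Real.pi_pos
    rw [hvreal]
    positivity
  set c : ℝ := (Real.sqrt (2*Real.pi*(v:ℝ)))⁻¹ * Real.exp (-(8/9)) with hc
  have hpdf : ∀ x ∈ Set.Ioc M (M+s), c ≤ gaussianPDFReal 0 v x := by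
    intro x hx
    rw [gaussianPDFReal]
    have hx0 : 0 < x := lt_of_le_of_lt hM hx.1
    have hxle : x ≤ (4/3)*s := by
      have : M ≤ s/3 - 1 := by linarith
      have := hx.2
      linarith
    have hexp : Real.exp (-(8/9)) ≤ Real.exp (-(x-0)^2/(2*(v:ℝ))) := by
      apply Real.exp_le_exp.2
      have h2v : (0:ℝ) < 2*(v:ℝ) := by rw [hvreal]; positivity
      rw [le_div_iff₀ h2v, hvreal]
      nlinarith
    rw [hc]
    exact mul_le_mul_of_nonneg_left hexp (by positivity)
  have hintc : (1:ℝ)/10 ≤ s * c := by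
    have hsqrt_eq : Real.sqrt (2*Real.pi*(v:ℝ)) = Real.sqrt (2*Real.pi) * s := by
      rw [hvreal, Real.sqrt_mul (by positivity), Real.sqrt_sq hs0.le]
    have hsqrt_le : Real.sqrt (2*Real.pi) ≤ 3 := by
      have h9 : Real.sqrt 9 = 3 := by
        rw [show (9:ℝ) = 3^2 by norm_num, Real.sqrt_sq (by norm_num)]
      rw [← h9]
      apply Real.sqrt_le_sqrt
      have := Real.pi_lt_d2
      linarith
    have hsqrt_pos : 0 < Real.sqrt (2*Real.pi) := Real.sqrt_pos.2 (by positivity)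
    have hexp3 : (1:ℝ)/3 ≤ Real.exp (-(8/9)) := by
      have h1 : Real.exp (8/9) ≤ Real.exp 1 := Real.exp_le_exp.2 (by norm_num)
      have h2 : Real.exp 1 < 2.7182818286 := Real.exp_one_lt_d9
      have h3 : 0 < Real.exp (8/9) := Real.exp_pos _
      have h4 : Real.exp (8/9) ≤ 3 := by linarith
      have := one_div_le_one_div_of_le h3 h4
      rw [Real.exp_neg, inv_eq_one_div]
      linarith
    have : s * c = (Real.sqrt (2*Real.pi))⁻¹ * Real.exp (-(8/9)) := by
      rw [hc, hsqrt_eq, mul_inv]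
      field_simp
    rw [this]
    have h13 : (1:ℝ)/3 ≤ (Real.sqrt (2*Real.pi))⁻¹ := by
      have := one_div_le_one_div_of_le hsqrt_pos hsqrt_le
      rw [inv_eq_one_div]
      linarith
    nlinarith [Real.exp_pos (-(8/9 : ℝ))]
  calc (1:ℝ)/10 ≤ s * c := hintc
    _ = ∫ _ in Set.Ioc M (M+s), c := by
        rw [setIntegral_const, smul_eq_mul, Real.volume_real_Ioc_of_le (by linarith)]
        ring_nf
    _ ≤ ∫ x in Set.Ioc M (M+s), gaussianPDFReal 0 v x := by
        refine setIntegral_mono_on (integrableOn_const (by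
          rw [Real.volume_Ioc]; exact ENNReal.ofReal_ne_top))
          ((integrable_gaussianPDFReal 0 v).integrableOn) measurableSet_Ioc hpdf

end Gauss

section BSide

variable {Ω : Type*} [mΩ : MeasurableSpace Ω] {P : Measure Ω} [IsProbabilityMeasure P]
  {B : ℝ → Ω → ℝ}

lemma Y_iIndep
    (hind : ∀ n : ℕ, ∀ t : ℕ → ℝ, Monotone t → (∀ i, 0 ≤ t i) →
      iIndepFun
        (fun (i : Fin n) ω => B (t (i + 1)) ω - B (t i) ω) P) :
    iIndepFun
      (fun (i : ℕ) ω => B ((i:ℝ)+1) ω - B (i:ℝ) ω) P := by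
  rw [iIndepFun_iff]
  intro s f' hf'
  set n := (s.sup id) + 1 with hn
  have hlt : ∀ m ∈ s, m < n := fun m hm =>
    Nat.lt_succ_of_le (Finset.le_sup (f := id) hm)
  have hFin := hind n (fun k => (k:ℝ)) (fun a b hab => by simp only []; exact_mod_cast hab)
    (fun i => by positivity)
  have hcast : (fun (i : Fin n) ω => B ((((i:ℕ) + 1 : ℕ)):ℝ) ω - B (((i:ℕ) : ℕ):ℝ) ω)
      = fun (i : Fin n) ω => B (((i:ℕ):ℝ)+1) ω - B ((i:ℕ):ℝ) ω := by
    funext i ω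
    norm_num
  rw [hcast] at hFin
  rw [iIndepFun_iff] at hFin
  set s' : Finset (Fin n) := s.attachFin hlt with hs'
  have hmem : ∀ j : Fin n, j ∈ s' ↔ (j:ℕ) ∈ s := fun j => Finset.mem_attachFin hlt
  have hkey := hFin s' (f' := fun j : Fin n => f' (j:ℕ)) ?_
  · have hInter : (⋂ j ∈ s', f' (j:ℕ)) = ⋂ i ∈ s, f' i := by
      ext ω
      simp only [mem_iInter]
      constructor
      · intro h i hi
        exact h ⟨i, hlt i hi⟩ ((hmem _).2 hi)
      · intro h j hj
        exact h (j:ℕ) ((hmem _).1 hj)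
    have hProd : ∏ j ∈ s', P (f' (j:ℕ)) = ∏ i ∈ s, P (f' i) := by
      refine Finset.prod_bij (fun (j : Fin n) (hj : j ∈ s') => (j:ℕ)) ?_ ?_ ?_ ?_
      · intro a ha; exact (hmem _).1 ha
      · intro a₁ ha₁ a₂ ha₂ h; exact Fin.ext h
      · intro i hi; exact ⟨⟨i, hlt i hi⟩, (hmem _).2 hi, rfl⟩
      · intro a ha; rfl
    rw [hInter, hProd] at hkey
    exact hkey
  · intro j hj
    exact hf' (j:ℕ) ((hmem _).1 hj)


lemma bstar_unbounded (hB : IsBrownianMotion P B) :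
    ∀ᵐ ω ∂P, ∀ M : ℝ, ∃ σ, 0 < σ ∧ M < sSup ((fun s => B s ω) '' Set.Icc 0 σ) := by
  classical
  set Y : ℕ → Ω → ℝ := fun i ω => B ((i:ℝ)+1) ω - B (i:ℝ) ω with hY
  have hYmeas : ∀ i, Measurable (Y i) := fun i => (hB.meas _).sub (hB.meas _)
  have hYindep : iIndepFun Y P := Y_iIndep hB.indepInc
  set Sn : ℕ → Ω → ℝ := fun n ω => ∑ i ∈ Finset.range n, Y i ω with hSn
  have hSnB : ∀ (n : ℕ) ω, Sn n ω = B (n:ℝ) ω - B 0 ω := by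
    intro n ω
    have h1 : ∀ i : ℕ, Y i ω
        = (fun i : ℕ => B (i:ℝ) ω) (i+1) - (fun i : ℕ => B (i:ℝ) ω) i := by
      intro i
      simp only [hY]
      norm_num
    calc Sn n ω = ∑ i ∈ Finset.range n,
          ((fun i : ℕ => B (i:ℝ) ω) (i+1) - (fun i : ℕ => B (i:ℝ) ω) i) :=
        Finset.sum_congr rfl (fun i _ => h1 i)
      _ = B (n:ℝ) ω - B ((0:ℕ):ℝ) ω := Finset.sum_range_sub (fun i : ℕ => B (i:ℝ) ω) n
      _ = B (n:ℝ) ω - B 0 ω := by norm_num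
  set E : Set Ω := ⋂ (M : ℕ), ⋃ (n : ℕ), {ω | (M:ℝ) < Sn n ω} with hE
  have hEmem : ∀ ω, ω ∈ E ↔ ∀ M : ℕ, ∃ n : ℕ, (M:ℝ) < Sn n ω := by
    intro ω
    simp only [hE, mem_iInter, mem_iUnion, mem_setOf_eq]
  have hSnmeas : ∀ n, Measurable (Sn n) :=
    fun n => Finset.measurable_sum _ (fun i _ => hYmeas i)
  have hEmeas : MeasurableSet E := by
    refine MeasurableSet.iInter fun M => MeasurableSet.iUnion fun n => ?_
    exact measurableSet_lt measurable_const (hSnmeas n)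
  -- Kolmogorov 0-1 law
  set 𝔰 : ℕ → MeasurableSpace Ω := fun i => MeasurableSpace.comap (Y i) inferInstance with h𝔰
  have h_le : ∀ i, 𝔰 i ≤ mΩ := fun i => measurable_iff_comap_le.1 (hYmeas i)
  have h_indep : iIndep 𝔰 P := (iIndepFun_iff_iIndep _ _ _).1 hYindep
  have ht_tail : MeasurableSet[limsup 𝔰 atTop] E := by
    rw [limsup_eq_iInf_iSup_of_nat, MeasurableSpace.measurableSet_iInf]
    intro k
    -- E is equal to a set defined using only Y_i, i ≥ k
    have hEk : E = ⋂ (M : ℕ), ⋃ (n : ℕ),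
        {ω | (M:ℝ) < ∑ i ∈ Finset.range n, Y (k+i) ω} := by
      have hshift : ∀ (n : ℕ) ω, ∑ i ∈ Finset.range n, Y (k+i) ω = Sn (k+n) ω - Sn k ω := by
        intro n ω
        rw [hSn]
        simp only
        rw [Finset.sum_range_add]
        ring
      ext ω
      rw [hEmem]
      simp only [mem_iInter, mem_iUnion, mem_setOf_eq]
      constructor
      · intro h M
        set R : ℝ := (Finset.range (k+1)).sup' (by simp) (fun m => Sn m ω) with hR
        obtain ⟨n0, hn0⟩ := h (⌈max ((M:ℝ) + Sn k ω) R⌉₊)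
        have hceil : max ((M:ℝ) + Sn k ω) R ≤ (⌈max ((M:ℝ) + Sn k ω) R⌉₊ : ℝ) := Nat.le_ceil _
        have hgtR : R < Sn n0 ω := lt_of_le_of_lt (le_trans (le_max_right _ _) hceil) hn0
        have hn0k : k < n0 := by
          by_contra hcon
          push_neg at hcon
          have : Sn n0 ω ≤ R := Finset.le_sup' (fun m => Sn m ω)
            (Finset.mem_range.2 (Nat.lt_succ_of_le hcon))
          linarith
        refine ⟨n0 - k, ?_⟩
        rw [hshift, Nat.add_sub_cancel' hn0k.le]
        have := le_trans (le_max_left _ _) hceil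
        linarith
      · intro h M
        obtain ⟨n, hn⟩ := h (M + ⌈|Sn k ω|⌉₊)
        rw [hshift] at hn
        refine ⟨k + n, ?_⟩
        have h1 : |Sn k ω| ≤ (⌈|Sn k ω|⌉₊ : ℝ) := Nat.le_ceil _
        have h2 : -(⌈|Sn k ω|⌉₊ : ℝ) ≤ Sn k ω := by
          have := neg_abs_le (Sn k ω)
          linarith
        push_cast at hn ⊢
        linarith
    rw [hEk]
    have hY' : ∀ j, k ≤ j → Measurable[⨆ i, ⨆ (_ : i ≥ k), 𝔰 i] (Y j) := by
      intro j hj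
      apply measurable_iff_comap_le.2
      exact le_iSup₂ (f := fun i (_ : i ≥ k) => 𝔰 i) j hj
    refine MeasurableSet.iInter fun M => MeasurableSet.iUnion fun n => ?_
    exact measurableSet_lt measurable_const
      (Finset.measurable_sum _ (fun i _ => hY' (k+i) (Nat.le_add_right k i)))
  have h01 := measure_zero_or_one_of_measurableSet_limsup_atTop h_le h_indep ht_tail
  -- lower bound on P E
  have hUmeas : ∀ M : ℕ, MeasurableSet (⋃ (n : ℕ), {ω | (M:ℝ) < Sn n ω}) :=
    fun M => MeasurableSet.iUnion fun n => measurableSet_lt measurable_const (hSnmeas n)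
  have hUanti : Antitone (fun M : ℕ => ⋃ (n : ℕ), {ω | (M:ℝ) < Sn n ω}) := by
    intro M M' hMM'
    refine iUnion_mono fun n => ?_
    intro ω hω
    have : (M:ℝ) ≤ (M':ℝ) := by exact_mod_cast hMM'
    exact lt_of_le_of_lt this hω
  have hPE : P E = ⨅ M : ℕ, P (⋃ (n : ℕ), {ω | (M:ℝ) < Sn n ω}) := by
    rw [hE]
    exact Directed.measure_iInter (fun M => (hUmeas M).nullMeasurableSet)
      hUanti.directed_ge ⟨0, measure_ne_top _ _⟩
  have hlow : ENNReal.ofReal (1/10) ≤ P E := by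
    rw [hPE]
    refine le_iInf fun M => ?_
    set n : ℕ := (3*M+3)^2 with hn
    have hsub : {ω | (M:ℝ) < B (n:ℝ) ω - B 0 ω} ⊆ ⋃ (m : ℕ), {ω | (M:ℝ) < Sn m ω} := by
      intro ω hω
      exact mem_iUnion.2 ⟨n, by rw [mem_setOf_eq, hSnB]; exact hω⟩
    refine le_trans ?_ (measure_mono hsub)
    have hmap : P {ω | (M:ℝ) < B (n:ℝ) ω - B 0 ω}
        = gaussianReal 0 (Real.toNNReal ((n:ℝ) - 0)) (Set.Ioi (M:ℝ)) := by
      rw [← hB.gaussInc 0 (n:ℝ) le_rfl (by positivity),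
        Measure.map_apply (show Measurable (fun ω => B (n:ℝ) ω - B 0 ω) from (hB.meas _).sub (hB.meas _)) measurableSet_Ioi]
      rfl
    rw [hmap]
    have hcast : ((n:ℝ) - 0) = (((3*M+3 : ℕ):ℝ))^2 := by
      rw [hn]
      push_cast
      ring
    rw [hcast]
    refine gauss_tail (by positivity) ?_
    push_cast
    linarith
  have hPE1 : P E = 1 := by
    rcases h01 with h | h
    · exfalso
      rw [h] at hlow
      simp at hlow
    · exact h
  have hae : ∀ᵐ ω ∂P, ω ∈ E := by
    rw [ae_iff]
    have : {ω | ¬ ω ∈ E} = Eᶜ := rfl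
    rw [this]
    exact (prob_compl_eq_zero_iff hEmeas).2 hPE1
  filter_upwards [hae, hB.start, hB.cont] with ω hωE h0 hcont
  intro M
  rw [hEmem] at hωE
  obtain ⟨n, hn⟩ := hωE ⌈M⌉₊
  rw [hSnB, h0, sub_zero] at hn
  have hMle : M ≤ (⌈M⌉₊ : ℝ) := Nat.le_ceil M
  have hn0 : 0 < n := by
    rcases Nat.eq_zero_or_pos n with h | h
    · exfalso
      rw [h] at hn
      norm_num at hn
      rw [h0] at hn
      have : (0:ℝ) ≤ (⌈M⌉₊ : ℝ) := by positivity
      linarith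
    · exact h
  refine ⟨(n:ℝ), by exact_mod_cast hn0, ?_⟩
  have hbdd : BddAbove ((fun s => B s ω) '' Set.Icc 0 (n:ℝ)) :=
    isCompact_Icc.bddAbove_image hcont.continuousOn
  have hmem : B (n:ℝ) ω ∈ (fun s => B s ω) '' Set.Icc 0 (n:ℝ) :=
    ⟨(n:ℝ), ⟨by positivity, le_rfl⟩, rfl⟩
  have := le_csSup hbdd hmem
  linarith

end BSide
end Stmt18

/-- Let `X*(t) = sup_{s ∈ [0,t]} X(s)` be the running supremum of
`X(t) = B(S(t))` and `S_{1/2}(t) = inf{τ > 0 : B*(τ) > t}`.  Then for every `t ≥ 0`,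
almost surely `X*(t) = inf{τ > 0 : T(S_{1/2}(τ)) > t}`: the running supremum of `X` is the
inverse of the subordinator `T ∘ S_{1/2}`.  (Moreover `X*(t) = B*(S(t))`.) -/
theorem delayedBM_running_sup_as_inverse
    {Ω : Type*} [mΩ : MeasurableSpace Ω] (P : Measure Ω) [IsProbabilityMeasure P]
    (B T : ℝ → Ω → ℝ) (ν : Measure ℝ)
    (hB : IsBrownianMotion P B) (hT : IsSubordinatorProc P T)
    (hν : IsLevyMeasure ν)
    (hLap : HasLaplaceExponent P T (levyExponent ν))
    (hInd : IndepFun (fun ω (t : ℝ) => B t ω) (fun ω (t : ℝ) => T t ω) P) :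
    ∀ t : ℝ, 0 ≤ t → ∀ᵐ ω ∂P,
      runSup (fun s ω' => B (invSub T s ω') ω') t ω =
          invSub (fun τ ω' => T (invSub (runSup B) τ ω') ω') t ω ∧
        runSup (fun s ω' => B (invSub T s ω') ω') t ω = runSup B (invSub T t ω) ω := by
  intro t ht
  filter_upwards [hT.start, Stmt18.T_strict hT hν hLap, hT.rightCont,
    Stmt18.T_unbounded hT hν hLap ht, hB.start, hB.cont, Stmt18.bstar_unbounded hB]
    with ω h1 h2 h3 h4 h5 h6 h7
  have := Stmt18.pathwise (g := fun τ => T τ ω) (b := fun s => B s ω) ht h1 h2 h3 h4 h5 h6 h7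
  simp only [runSup, invSub]
  exact ⟨this.1, this.2⟩
end
end
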